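/- arXiv:2003.10034 — 3 statements merged into one kernel-verified Lean document; each statement's English description precedes it below -/
import Mathlib

section
/- Let T be the infinite rooted k-ary tree with k ≥ 2, 1 < p < ∞, 1 < s < ∞, and w a weight. Then (Σ_{x∈T} (Mf(x))^p w(x))^{1/p} ≤ c_s (Σ_{x∈T} |f(x)|^p M_s w(x))^{1/p}, where M_s w = (M(w^s))^{1/s} and c_s → ∞ as s → 1. -/
open scoped ENNReal NNReal BigOperators

noncomputable section

/-- Vertices of the infinite rooted `k`-ary tree: finite words over `Fin k`. -/
abbrev V (k : ℕ) := List (Fin k)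

/-- Length of the longest common prefix (depth of the deepest common ancestor). -/
def lcpLen {k : ℕ} : List (Fin k) → List (Fin k) → ℕ
  | a :: as, b :: bs => if a = b then lcpLen as bs + 1 else 0
  | _, _ => 0

/-- Graph distance on the infinite rooted `k`-ary tree. -/
def tdist {k : ℕ} (x y : V k) : ℕ :=
  (x.length - lcpLen x y) + (y.length - lcpLen x y)

/-- Sphere of radius `r` centered at `x`. -/
def sph {k : ℕ} (x : V k) (r : ℕ) : Set (V k) := {y | tdist x y = r}

/-- Closed ball of radius `r` centered at `x`. -/
def ball {k : ℕ} (x : V k) (r : ℕ) : Set (V k) := {y | tdist x y ≤ r}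

def sphCard {k : ℕ} (x : V k) (r : ℕ) : ℝ≥0∞ := ((sph x r).ncard : ℝ≥0∞)
def ballCard {k : ℕ} (x : V k) (r : ℕ) : ℝ≥0∞ := ((ball x r).ncard : ℝ≥0∞)

/-- `w(A) = Σ_{y ∈ A} w(y)`, the weighted (counting) measure of `A`. -/
def wsum {k : ℕ} (w : V k → ℝ≥0∞) (A : Set (V k)) : ℝ≥0∞ := ∑' y : A, w ↑y

/-- Spherical average `A_r° f (x)`. -/
def sphAvg {k : ℕ} (f : V k → ℝ≥0∞) (x : V k) (r : ℕ) : ℝ≥0∞ :=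
  wsum f (sph x r) / sphCard x r

/-- Spherical maximal operator `M°`. -/
def Msph {k : ℕ} (f : V k → ℝ≥0∞) (x : V k) : ℝ≥0∞ := ⨆ r : ℕ, sphAvg f x r

/-- Centered Hardy–Littlewood maximal operator `M`. -/
def Mball {k : ℕ} (f : V k → ℝ≥0∞) (x : V k) : ℝ≥0∞ :=
  ⨆ r : ℕ, wsum f (ball x r) / ballCard x r

/-- `|f|` of a real-valued function, as an `ℝ≥0∞`-valued function. -/
def absE {k : ℕ} (f : V k → ℝ) : V k → ℝ≥0∞ := fun y => ENNReal.ofReal |f y|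

/-- `M_s w = (M(w^s))^{1/s}` (centered version). -/
def MsBall {k : ℕ} (s : ℝ) (w : V k → ℝ≥0∞) (x : V k) : ℝ≥0∞ :=
  (Mball (fun y => w y ^ s) x) ^ (1 / s)

/-- `M_s° w = (M°(w^s))^{1/s}` (spherical version). -/
def MsSph {k : ℕ} (s : ℝ) (w : V k → ℝ≥0∞) (x : V k) : ℝ≥0∞ :=
  (Msph (fun y => w y ^ s) x) ^ (1 / s)

namespace FS

variable {k : ℕ}

@[simp] lemma lcpLen_nil_left (y : V k) : lcpLen [] y = 0 := by cases y <;> rfl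

@[simp] lemma lcpLen_nil_right (x : V k) : lcpLen x [] = 0 := by cases x <;> rfl

@[simp] lemma lcpLen_cons_cons (a b : Fin k) (as bs : List (Fin k)) :
    lcpLen (a :: as) (b :: bs) = if a = b then lcpLen as bs + 1 else 0 := rfl

lemma lcpLen_le_left (x y : V k) : lcpLen x y ≤ x.length := by
  induction x generalizing y with
  | nil => simp
  | cons a as ih =>
    cases y with
    | nil => simp
    | cons b bs =>
      by_cases h : a = b <;> simp [h]
      exact ih bs

lemma lcpLen_comm (x y : V k) : lcpLen x y = lcpLen y x := by
  induction x generalizing y with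
  | nil => simp
  | cons a as ih =>
    cases y with
    | nil => simp
    | cons b bs =>
      by_cases h : a = b
      · subst h; simp [ih bs]
      · rw [lcpLen_cons_cons, lcpLen_cons_cons, if_neg h, if_neg (Ne.symm h)]

lemma lcpLen_le_right (x y : V k) : lcpLen x y ≤ y.length := by
  rw [lcpLen_comm]; exact lcpLen_le_left y x

lemma take_lcpLen (x y : V k) : x.take (lcpLen x y) = y.take (lcpLen x y) := by
  induction x generalizing y with
  | nil => simp
  | cons a as ih =>
    cases y with
    | nil => simp
    | cons b bs =>
      by_cases h : a = b
      · subst h; simp [ih bs]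
      · simp [h]

@[simp] lemma lcpLen_self (x : V k) : lcpLen x x = x.length := by
  induction x with
  | nil => simp
  | cons a as ih => simp [ih]

lemma lcpLen_append (x t : V k) : lcpLen x (x ++ t) = x.length := by
  induction x with
  | nil => simp
  | cons a as ih => simp [ih]

lemma tdist_self (x : V k) : tdist x x = 0 := by simp [tdist]

lemma tdist_comm (x y : V k) : tdist x y = tdist y x := by
  unfold tdist; rw [lcpLen_comm]; ring

lemma tdist_append (x t : V k) : tdist x (x ++ t) = t.length := by
  unfold tdist; rw [lcpLen_append]; simp

lemma mem_ball_iff {x y : V k} {r : ℕ} : y ∈ ball x r ↔ tdist x y ≤ r := Iff.rfl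

lemma mem_ball_comm {x y : V k} {r : ℕ} : y ∈ ball x r ↔ x ∈ ball y r := by
  simp [mem_ball_iff, tdist_comm]

lemma self_mem_ball (x : V k) (r : ℕ) : x ∈ ball x r := by
  simp [mem_ball_iff, tdist_self]

/-- encoding of `y` relative to center `x`. -/
def enc (x y : V k) : ℕ × V k := (x.length - lcpLen x y, y.drop (lcpLen x y))

lemma enc_injective (x : V k) : Function.Injective (enc x) := by
  intro y₁ y₂ h
  have h1 := congrArg Prod.fst h
  have h2 := congrArg Prod.snd h
  simp only [enc] at h1 h2
  have e1 : lcpLen x y₁ ≤ x.length := lcpLen_le_left x y₁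
  have e2 : lcpLen x y₂ ≤ x.length := lcpLen_le_left x y₂
  have hl : lcpLen x y₁ = lcpLen x y₂ := by omega
  have t1 : y₁ = y₁.take (lcpLen x y₁) ++ y₁.drop (lcpLen x y₁) := (List.take_append_drop _ _).symm
  have t2 : y₂ = y₂.take (lcpLen x y₂) ++ y₂.drop (lcpLen x y₂) := (List.take_append_drop _ _).symm
  rw [← take_lcpLen x y₁] at t1
  rw [← take_lcpLen x y₂] at t2
  rw [hl] at h2
  rw [t1, t2, hl, h2]

lemma length_le_of_mem_ball {x y : V k} {r : ℕ} (h : y ∈ ball x r) :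
    y.length ≤ x.length + r := by
  have := lcpLen_le_left x y
  have hb : tdist x y ≤ r := h
  unfold tdist at hb
  omega

lemma ball_finite (x : V k) (r : ℕ) : (ball x r).Finite := by
  apply Set.Finite.subset (List.finite_length_le (Fin k) (x.length + r))
  intro y hy
  exact length_le_of_mem_ball hy

lemma tdist_eq_enc {x y : V k} : tdist x y = (enc x y).1 + (enc x y).2.length := by
  simp [tdist, enc, List.length_drop]

/-- The master counting estimate. -/
lemma master (x : V k) (r : ℕ) (Φ : ℕ → ℕ → ℝ≥0∞) :
    (∑' y : V k, (ball x r).indicator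
        (fun y => Φ (x.length - lcpLen x y) (y.length - lcpLen x y)) y)
      ≤ ∑ t ∈ Finset.range (r+1), ∑ v ∈ Finset.range (r+1-t), (k : ℝ≥0∞)^v * Φ t v := by
  set Ψ : ℕ × V k → ℝ≥0∞ := fun z => if z.1 + z.2.length ≤ r then Φ z.1 z.2.length else 0 with hΨ
  have hval : ∀ y : V k, y ∈ ball x r → Ψ (enc x y) =
      Φ (x.length - lcpLen x y) (y.length - lcpLen x y) := by
    intro y hy
    simp only [hΨ, enc, List.length_drop]
    rw [if_pos]
    exact hy
  have hpt : ∀ y : V k, (ball x r).indicator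
      (fun y => Φ (x.length - lcpLen x y) (y.length - lcpLen x y)) y ≤ Ψ (enc x y) := by
    intro y
    by_cases hy : y ∈ ball x r
    · rw [Set.indicator_of_mem hy, hval y hy]
    · rw [Set.indicator_of_notMem hy]; exact zero_le
  have hΨ0 : ∀ t : ℕ, ∀ l : V k, r < t → Ψ (t, l) = 0 := by
    intro t l ht
    simp only [hΨ]
    rw [if_neg]
    omega
  calc (∑' y : V k, (ball x r).indicator
        (fun y => Φ (x.length - lcpLen x y) (y.length - lcpLen x y)) y)
      ≤ ∑' y : V k, Ψ (enc x y) := ENNReal.tsum_le_tsum hpt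
    _ ≤ ∑' z : ℕ × V k, Ψ z := ENNReal.tsum_comp_le_tsum_of_injective (enc_injective x) Ψ
    _ = ∑' t : ℕ, ∑' l : V k, Ψ (t, l) := ENNReal.tsum_prod (f := fun t l => Ψ (t, l))
    _ = ∑ t ∈ Finset.range (r+1), ∑' l : V k, Ψ (t, l) := by
        refine tsum_eq_sum ?_
        intro t ht
        rw [Finset.mem_range, not_lt] at ht
        exact ENNReal.tsum_eq_zero.mpr fun l => hΨ0 t l (by omega)
    _ ≤ ∑ t ∈ Finset.range (r+1), ∑ v ∈ Finset.range (r+1-t), (k : ℝ≥0∞)^v * Φ t v := by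
        refine Finset.sum_le_sum ?_
        intro t ht
        rw [Finset.mem_range] at ht
        have e1 : (∑' l : V k, Ψ (t, l)) =
            ∑' z : Σ n : ℕ, Fin n → Fin k, Ψ (t, List.ofFn z.2) := by
          refine (Equiv.tsum_eq (List.equivSigmaTuple (α := Fin k)).symm _).symm.trans ?_
          apply tsum_congr
          intro z
          rfl
        have e2 : ∀ (n : ℕ) (σ : Fin n → Fin k),
            Ψ (t, List.ofFn σ) = if t + n ≤ r then Φ t n else 0 := by
          intro n σ
          simp only [hΨ, List.length_ofFn]
        rw [e1, ENNReal.tsum_sigma']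
        have e3 : ∀ n : ℕ, (∑' σ : Fin n → Fin k, Ψ (t, List.ofFn σ)) =
            (k : ℝ≥0∞)^n * (if t + n ≤ r then Φ t n else 0) := by
          intro n
          rw [tsum_fintype]
          simp only [e2 n]
          rw [Finset.sum_const, nsmul_eq_mul]
          congr 1
          rw [Finset.card_univ, Fintype.card_fun, Fintype.card_fin, Fintype.card_fin]
          push_cast
          rfl
        calc (∑' n : ℕ, ∑' σ : Fin n → Fin k, Ψ (t, List.ofFn σ))
            = ∑' n : ℕ, (k : ℝ≥0∞)^n * (if t + n ≤ r then Φ t n else 0) := tsum_congr e3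
          _ = ∑ v ∈ Finset.range (r+1-t), (k : ℝ≥0∞)^v * (if t + v ≤ r then Φ t v else 0) := by
              refine tsum_eq_sum ?_
              intro v hv
              rw [Finset.mem_range] at hv
              rw [if_neg (by omega), mul_zero]
          _ ≤ ∑ v ∈ Finset.range (r+1-t), (k : ℝ≥0∞)^v * Φ t v := by
              refine Finset.sum_le_sum ?_
              intro v hv
              rw [Finset.mem_range] at hv
              rw [if_pos (by omega)]

/-- Hölder for `tsum` on an arbitrary type, `ℝ≥0∞`-valued. -/
lemma tsum_holder {α : Type*} {p q : ℝ} (hpq : p.HolderConjugate q) (f g : α → ℝ≥0∞) :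
    ∑' a, f a * g a ≤ (∑' a, f a ^ p) ^ (1/p) * (∑' a, g a ^ q) ^ (1/q) := by
  letI : MeasurableSpace α := ⊤
  haveI : MeasurableSingletonClass α := ⟨fun _ => trivial⟩
  have hf : AEMeasurable f (MeasureTheory.Measure.count : MeasureTheory.Measure α) :=
    (Measurable.aemeasurable (fun s _ => trivial))
  have hg : AEMeasurable g (MeasureTheory.Measure.count : MeasureTheory.Measure α) :=
    (Measurable.aemeasurable (fun s _ => trivial))
  have := ENNReal.lintegral_mul_le_Lp_mul_Lq
    (MeasureTheory.Measure.count : MeasureTheory.Measure α) hpq hf hg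
  simpa only [MeasureTheory.lintegral_count, Pi.mul_apply] using this

lemma iSup_rpow_le_tsum {p : ℝ} (hp : 0 < p) (A : ℕ → ℝ≥0∞) :
    (⨆ r : ℕ, A r) ^ p ≤ ∑' r : ℕ, A r ^ p := by
  have h1 : ∀ r, A r ≤ (∑' r : ℕ, A r ^ p) ^ (1/p) := by
    intro r
    have : A r = (A r ^ p) ^ (1/p) := by
      rw [← ENNReal.rpow_mul, mul_one_div, div_self hp.ne', ENNReal.rpow_one]
    rw [this]
    exact ENNReal.rpow_le_rpow (ENNReal.le_tsum r) (by positivity)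
  have h2 : (⨆ r : ℕ, A r) ≤ (∑' r : ℕ, A r ^ p) ^ (1/p) := iSup_le h1
  calc (⨆ r : ℕ, A r) ^ p ≤ ((∑' r : ℕ, A r ^ p) ^ (1/p)) ^ p :=
        ENNReal.rpow_le_rpow h2 hp.le
    _ = ∑' r : ℕ, A r ^ p := by
        rw [← ENNReal.rpow_mul, one_div_mul_cancel hp.ne', ENNReal.rpow_one]

lemma indicator_rpow {α : Type*} {p : ℝ} (hp : 0 < p) (A : Set α) (f : α → ℝ≥0∞) (a : α) :
    (A.indicator f a) ^ p = A.indicator (fun x => f x ^ p) a := by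
  by_cases h : a ∈ A
  · simp [Set.indicator_of_mem h]
  · simp [Set.indicator_of_notMem h, ENNReal.zero_rpow_of_pos hp]

/-- convergence of the series `∑ (r+1)^E * ρ^r`. -/
lemma series_fin (E : ℝ) {θ : ℝ} (hθ : 0 < θ) :
    (∑' r : ℕ, ((r+1 : ℕ) : ℝ≥0∞) ^ E * (2 : ℝ≥0∞) ^ (-θ * (r : ℝ))) ≠ ⊤ := by
  set m : ℕ := ⌈E⌉₊ with hm
  set ρ : ℝ≥0 := (2 : ℝ≥0) ^ (-θ) with hρ
  have hρpos : 0 < (ρ : ℝ) := by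
    rw [hρ, NNReal.coe_rpow]
    exact Real.rpow_pos_of_pos (by norm_num) _
  have hρ1 : (ρ : ℝ) < 1 := by
    rw [hρ, NNReal.coe_rpow]
    exact Real.rpow_lt_one_of_one_lt_of_neg (by norm_num) (by linarith)
  have hbound : ∀ r : ℕ, ((r+1 : ℕ) : ℝ≥0∞) ^ E * (2 : ℝ≥0∞) ^ (-θ * (r : ℝ))
      ≤ ((((r+1 : ℕ) : ℝ≥0) ^ m * ρ ^ r : ℝ≥0) : ℝ≥0∞) := by
    intro r
    have hA : ((r+1 : ℕ) : ℝ≥0∞) ^ E ≤ ((((r+1 : ℕ) : ℝ≥0) ^ m : ℝ≥0) : ℝ≥0∞) := by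
      have h1 : ((r+1 : ℕ) : ℝ≥0∞) ^ E ≤ ((r+1 : ℕ) : ℝ≥0∞) ^ (m : ℝ) :=
        ENNReal.rpow_le_rpow_of_exponent_le
          (by exact_mod_cast Nat.one_le_iff_ne_zero.mpr (Nat.succ_ne_zero r)) (Nat.le_ceil E)
      refine h1.trans_eq ?_
      rw [ENNReal.rpow_natCast, ENNReal.coe_pow]
      norm_cast
    have hB : (2 : ℝ≥0∞) ^ (-θ * (r : ℝ)) = ((ρ ^ r : ℝ≥0) : ℝ≥0∞) := by
      rw [ENNReal.coe_pow, hρ, ENNReal.coe_rpow_of_ne_zero (by norm_num)]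
      have h22 : ((2:ℝ≥0):ℝ≥0∞) = 2 := by norm_cast
      rw [h22, ← ENNReal.rpow_natCast ((2:ℝ≥0∞) ^ (-θ)) r, ← ENNReal.rpow_mul]
    rw [ENNReal.coe_mul, hB]
    exact mul_le_mul' hA le_rfl
  refine ne_top_of_le_ne_top ?_ (ENNReal.tsum_le_tsum hbound)
  rw [ENNReal.tsum_coe_ne_top_iff_summable, ← NNReal.summable_coe]
  have hs : Summable (fun r : ℕ => ((r+1 : ℕ) : ℝ) ^ m * (ρ : ℝ) ^ r) := by
    have base : Summable (fun r : ℕ => (r : ℝ) ^ m * (ρ : ℝ) ^ r) := by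
      apply summable_pow_mul_geometric_of_norm_lt_one
      rw [Real.norm_eq_abs, abs_of_nonneg hρpos.le]
      exact hρ1
    have shift : Summable (fun r : ℕ => ((r+1 : ℕ) : ℝ) ^ m * (ρ : ℝ) ^ (r+1)) := by
      have := (summable_nat_add_iff 1).mpr base
      exact this.congr (fun r => by push_cast; ring)
    have := shift.mul_left (ρ : ℝ)⁻¹
    refine this.congr ?_
    intro r
    field_simp
    ring
  refine hs.congr ?_
  intro r
  push_cast
  ring


end FS


namespace FS
variable {k : ℕ}

lemma tsum_indicator_finite {A : Set (V k)} (hA : A.Finite) (w : V k → ℝ≥0∞) :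
    ∑' y : V k, A.indicator w y = ∑ y ∈ hA.toFinset, w y := by
  rw [tsum_eq_sum (s := hA.toFinset) (fun b hb => Set.indicator_of_notMem (by simpa using hb) w)]
  exact Finset.sum_congr rfl fun y hy => Set.indicator_of_mem (by simpa using hy) w

lemma wsum_eq_tsum_indicator (w : V k → ℝ≥0∞) (A : Set (V k)) :
    wsum w A = ∑' y : V k, A.indicator w y := tsum_subtype A w

lemma ballCard_eq (x : V k) (r : ℕ) :
    ballCard x r = ∑' y : V k, (ball x r).indicator (fun _ => (1:ℝ≥0∞)) y := by
  rw [tsum_indicator_finite (ball_finite x r), Finset.sum_const, nsmul_eq_mul, mul_one,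
    ballCard, Set.ncard_eq_toFinset_card _ (ball_finite x r)]

lemma master_bound (x : V k) (r : ℕ) (Φ : ℕ → ℕ → ℝ≥0∞) (B : ℝ≥0∞)
    (hB : ∀ t v : ℕ, t + v ≤ r → (k : ℝ≥0∞)^v * Φ t v ≤ B) :
    (∑' y : V k, (ball x r).indicator
        (fun y => Φ (x.length - lcpLen x y) (y.length - lcpLen x y)) y)
      ≤ ((r+1 : ℕ) : ℝ≥0∞) ^ (2:ℝ) * B := by
  refine (master x r Φ).trans ?_
  have h1 : ∀ t ∈ Finset.range (r+1),
      (∑ v ∈ Finset.range (r+1-t), (k : ℝ≥0∞)^v * Φ t v) ≤ (r+1) • B := by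
    intro t ht
    rw [Finset.mem_range] at ht
    calc (∑ v ∈ Finset.range (r+1-t), (k : ℝ≥0∞)^v * Φ t v)
        ≤ (Finset.range (r+1-t)).card • B := by
          refine Finset.sum_le_card_nsmul _ _ _ ?_
          intro v hv
          rw [Finset.mem_range] at hv
          exact hB t v (by omega)
      _ ≤ (r+1) • B := by
          rw [Finset.card_range]
          exact smul_le_smul_of_nonneg_right (by omega) zero_le
  calc (∑ t ∈ Finset.range (r+1), ∑ v ∈ Finset.range (r+1-t), (k : ℝ≥0∞)^v * Φ t v)
      ≤ (Finset.range (r+1)).card • ((r+1) • B) := Finset.sum_le_card_nsmul _ _ _ h1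
    _ = ((r+1 : ℕ) : ℝ≥0∞) ^ (2:ℝ) * B := by
        rw [Finset.card_range, smul_smul, nsmul_eq_mul]
        have : (((r+1) * (r+1) : ℕ) : ℝ≥0∞) = ((r+1:ℕ) : ℝ≥0∞) ^ (2:ℝ) := by
          rw [show (2:ℝ) = ((2:ℕ):ℝ) by norm_num, ENNReal.rpow_natCast]
          push_cast
          ring
        rw [this]

lemma ballCard_le (hk : 1 ≤ k) (x : V k) (r : ℕ) :
    ballCard x r ≤ ((r+1 : ℕ) : ℝ≥0∞) ^ (2:ℝ) * (k : ℝ≥0∞) ^ (r : ℝ) := by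
  rw [ballCard_eq]
  refine master_bound x r (fun _ _ => 1) _ ?_
  intro t v htv
  rw [mul_one, ← ENNReal.rpow_natCast]
  refine ENNReal.rpow_le_rpow_of_exponent_le (by exact_mod_cast hk) ?_
  exact_mod_cast (by omega : v ≤ r)

lemma ballCard_ge (x : V k) (r : ℕ) : (k : ℝ≥0∞) ^ (r : ℝ) ≤ ballCard x r := by
  rw [ENNReal.rpow_natCast]
  have h1 : ((fun σ : Fin r → Fin k => x ++ List.ofFn σ) '' Set.univ) ⊆ ball x r := by
    rintro - ⟨σ, -, rfl⟩
    show tdist x (x ++ List.ofFn σ) ≤ r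
    rw [tdist_append, List.length_ofFn]
  have hinj : Function.Injective (fun σ : Fin r → Fin k => x ++ List.ofFn σ) := by
    intro a b h
    exact List.ofFn_injective (List.append_cancel_left h)
  have h2 : ((fun σ : Fin r → Fin k => x ++ List.ofFn σ) '' Set.univ).ncard = k ^ r := by
    rw [Set.ncard_image_of_injective _ hinj, Set.ncard_univ, Nat.card_eq_fintype_card,
      Fintype.card_fun, Fintype.card_fin, Fintype.card_fin]
  have h3 : k ^ r ≤ (ball x r).ncard := by
    rw [← h2]
    exact Set.ncard_le_ncard h1 (ball_finite x r)
  rw [ballCard]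
  exact_mod_cast h3

lemma ballCard_ne_zero (x : V k) (r : ℕ) : ballCard x r ≠ 0 := by
  rw [ballCard]
  have : 0 < (ball x r).ncard := (Set.ncard_pos (ball_finite x r)).mpr ⟨x, self_mem_ball x r⟩
  exact_mod_cast this.ne'

lemma ballCard_ne_top (x : V k) (r : ℕ) : ballCard x r ≠ ⊤ := ENNReal.natCast_ne_top _

lemma wsum_le_mul_Mball (w : V k → ℝ≥0∞) (y : V k) (r : ℕ) :
    wsum w (ball y r) ≤ ballCard y r * Mball w y := by
  have h1 : wsum w (ball y r) / ballCard y r ≤ Mball w y :=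
    le_iSup (fun r => wsum w (ball y r) / ballCard y r) r
  calc wsum w (ball y r) = wsum w (ball y r) / ballCard y r * ballCard y r :=
        (ENNReal.div_mul_cancel (ballCard_ne_zero y r) (ballCard_ne_top y r)).symm
    _ ≤ Mball w y * ballCard y r := mul_le_mul_left h1 _
    _ = ballCard y r * Mball w y := mul_comm _ _

end FS

namespace FS
variable {k : ℕ}

lemma holder_plain {α : Type*} {p q : ℝ} (hpq : p.HolderConjugate q) (F G : α → ℝ≥0∞)
    {Y Z : ℝ≥0∞} (hF : ∑' y, F y ^ p ≤ Y) (hG : ∑' y, G y ^ q ≤ Z) :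
    ∑' y, F y * G y ≤ Y ^ (1/p) * Z ^ (1/q) :=
  (tsum_holder hpq F G).trans
    (mul_le_mul' (ENNReal.rpow_le_rpow hF hpq.one_div_nonneg)
      (ENNReal.rpow_le_rpow hG hpq.symm.one_div_nonneg))

lemma row_bound (hk : 1 ≤ k) (x : V k) (r : ℕ) {e : ℝ} (he0 : 0 ≤ e) (he1 : e ≤ 1) :
    (∑' y : V k, (ball x r).indicator
      (fun y => (k:ℝ≥0∞) ^ (e * ((x.length - lcpLen x y : ℕ) : ℝ))) y)
      ≤ ((r+1:ℕ):ℝ≥0∞) ^ (2:ℝ) * (k:ℝ≥0∞) ^ (r:ℝ) := by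
  have hK0 : (k:ℝ≥0∞) ≠ 0 := by exact_mod_cast Nat.one_le_iff_ne_zero.mp hk
  have hKt : (k:ℝ≥0∞) ≠ ⊤ := ENNReal.natCast_ne_top k
  refine master_bound x r (fun t _ => (k:ℝ≥0∞) ^ (e * (t:ℝ))) _ ?_
  intro t v htv
  rw [← ENNReal.rpow_natCast (k:ℝ≥0∞) v, ← ENNReal.rpow_add _ _ hK0 hKt]
  refine ENNReal.rpow_le_rpow_of_exponent_le (by exact_mod_cast hk) ?_
  have h1 : e * (t:ℝ) ≤ (t:ℝ) := by
    calc e * (t:ℝ) ≤ 1 * (t:ℝ) := mul_le_mul_of_nonneg_right he1 (Nat.cast_nonneg t)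
      _ = (t:ℝ) := one_mul _
  have h2 : (v:ℝ) + (t:ℝ) ≤ (r:ℝ) := by exact_mod_cast (by omega : v + t ≤ r)
  linarith

lemma col_bound (hk : 1 ≤ k) (x : V k) (r : ℕ) {c : ℝ} (hc0 : 0 ≤ c) (hc1 : c ≤ 1) :
    (∑' y : V k, (ball x r).indicator
      (fun y => (k:ℝ≥0∞) ^ (-c * ((y.length - lcpLen x y : ℕ) : ℝ))) y)
      ≤ ((r+1:ℕ):ℝ≥0∞) ^ (2:ℝ) * (k:ℝ≥0∞) ^ ((r:ℝ) * (1 - c)) := by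
  have hK0 : (k:ℝ≥0∞) ≠ 0 := by exact_mod_cast Nat.one_le_iff_ne_zero.mp hk
  have hKt : (k:ℝ≥0∞) ≠ ⊤ := ENNReal.natCast_ne_top k
  refine master_bound x r (fun _ v => (k:ℝ≥0∞) ^ (-c * (v:ℝ))) _ ?_
  intro t v htv
  rw [← ENNReal.rpow_natCast (k:ℝ≥0∞) v, ← ENNReal.rpow_add _ _ hK0 hKt]
  refine ENNReal.rpow_le_rpow_of_exponent_le (by exact_mod_cast hk) ?_
  have h2 : (v:ℝ) ≤ (r:ℝ) := by exact_mod_cast (by omega : v ≤ r)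
  nlinarith

end FS

namespace FS
variable {k : ℕ}

lemma core (hk : 2 ≤ k) {p q s t : ℝ} (hpq : p.HolderConjugate q)
    (hst : s.HolderConjugate t) {θ : ℝ} (hθ0 : 0 < θ) (hθ1 : θ * q ≤ p) (hθ2 : θ * t ≤ 1)
    (w g : V k → ℝ≥0∞) (r : ℕ) :
    (∑' x : V k, w x * (wsum g (ball x r) / ballCard x r) ^ p)
      ≤ ((r+1:ℕ) : ℝ≥0∞) ^ ((2:ℝ)*p + 2) * (k : ℝ≥0∞) ^ (-θ * (r:ℝ))
          * ∑' y : V k, g y ^ p * MsBall s w y := by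
  have hk1 : 1 ≤ k := le_trans (by norm_num) hk
  have hK0 : (k:ℝ≥0∞) ≠ 0 := by exact_mod_cast Nat.one_le_iff_ne_zero.mp hk1
  have hKt : (k:ℝ≥0∞) ≠ ⊤ := ENNReal.natCast_ne_top k
  have hK1 : (1:ℝ≥0∞) ≤ (k:ℝ≥0∞) := by exact_mod_cast hk1
  have ha0 : ((r+1:ℕ) : ℝ≥0∞) ≠ 0 := by exact_mod_cast Nat.succ_ne_zero r
  have hat : ((r+1:ℕ) : ℝ≥0∞) ≠ ⊤ := ENNReal.natCast_ne_top _
  have ha1 : (1:ℝ≥0∞) ≤ ((r+1:ℕ) : ℝ≥0∞) := by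
    exact_mod_cast Nat.one_le_iff_ne_zero.mpr (Nat.succ_ne_zero r)
  have hp0 : 0 < p := hpq.pos
  have hp1 : (0:ℝ) ≤ p - 1 := by linarith [hpq.lt]
  have hq0 : 0 < q := hpq.symm.pos
  have hs0 : 0 < s := hst.pos
  have ht0 : 0 < t := hst.symm.pos
  set K : ℝ≥0∞ := (k : ℝ≥0∞) with hKdef
  set a : ℝ≥0∞ := ((r+1:ℕ) : ℝ≥0∞) with hadef
  set T1 : V k → ℝ≥0∞ := fun x => ∑' y : V k, (ball x r).indicator
    (fun y => g y ^ p * K ^ (-θ * ((x.length - lcpLen x y : ℕ) : ℝ))) y with hT1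
  have hAx : ∀ x : V k, (wsum g (ball x r) / ballCard x r) ^ p
      ≤ (a ^ ((2:ℝ)*(p-1)) * K ^ (-(r:ℝ))) * T1 x := by
    intro x
    set F1 : V k → ℝ≥0∞ := fun y => (ball x r).indicator
      (fun y => g y * K ^ (-(θ/p) * ((x.length - lcpLen x y : ℕ) : ℝ))) y with hF1
    set F2 : V k → ℝ≥0∞ := fun y => (ball x r).indicator
      (fun y => K ^ ((θ/p) * ((x.length - lcpLen x y : ℕ) : ℝ))) y with hF2
    have hsplit : ∀ y : V k, (ball x r).indicator g y = F1 y * F2 y := by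
      intro y
      by_cases h : y ∈ ball x r
      · rw [hF1, hF2]
        simp only [Set.indicator_of_mem h]
        rw [mul_assoc, ← ENNReal.rpow_add _ _ hK0 hKt]
        rw [show -(θ/p) * ((x.length - lcpLen x y : ℕ) : ℝ)
              + (θ/p) * ((x.length - lcpLen x y : ℕ) : ℝ) = 0 by ring]
        rw [ENNReal.rpow_zero, mul_one]
      · rw [hF1, hF2]
        simp only [Set.indicator_of_notMem h, zero_mul]
    have hF1p : ∀ y : V k, F1 y ^ p = (ball x r).indicator
        (fun y => g y ^ p * K ^ (-θ * ((x.length - lcpLen x y : ℕ) : ℝ))) y := by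
      intro y
      rw [hF1, indicator_rpow hp0]
      refine congrFun (congrArg _ (funext fun z => ?_)) y
      rw [ENNReal.mul_rpow_of_nonneg _ _ hp0.le, ← ENNReal.rpow_mul]
      congr 2
      field_simp
    have hF2q : ∀ y : V k, F2 y ^ q = (ball x r).indicator
        (fun y => K ^ ((θ/p*q) * ((x.length - lcpLen x y : ℕ) : ℝ))) y := by
      intro y
      rw [hF2, indicator_rpow hq0]
      refine congrFun (congrArg _ (funext fun z => ?_)) y
      rw [← ENNReal.rpow_mul]
      congr 1
      ring
    have hrow : (∑' y, F2 y ^ q) ≤ a ^ (2:ℝ) * K ^ (r:ℝ) := by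
      rw [tsum_congr hF2q]
      refine row_bound hk1 x r (by positivity) ?_
      rw [div_mul_eq_mul_div, div_le_one hp0]
      linarith [hθ1]
    have hS : wsum g (ball x r) ≤ (T1 x) ^ (1/p) * (a ^ (2:ℝ) * K ^ (r:ℝ)) ^ (1/q) := by
      rw [wsum_eq_tsum_indicator, tsum_congr hsplit]
      exact holder_plain hpq F1 F2 (le_of_eq (tsum_congr hF1p)) hrow
    have hdiv : wsum g (ball x r) / ballCard x r ≤ K ^ (-(r:ℝ)) * wsum g (ball x r) := by
      calc wsum g (ball x r) / ballCard x r ≤ wsum g (ball x r) / K ^ (r:ℝ) :=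
            ENNReal.div_le_div_left (ballCard_ge x r) _
        _ = K ^ (-(r:ℝ)) * wsum g (ball x r) := by
            rw [div_eq_mul_inv, ← ENNReal.rpow_neg, mul_comm]
    calc (wsum g (ball x r) / ballCard x r) ^ p
        ≤ (K ^ (-(r:ℝ)) * ((T1 x) ^ (1/p) * (a ^ (2:ℝ) * K ^ (r:ℝ)) ^ (1/q))) ^ p := by
          refine ENNReal.rpow_le_rpow (hdiv.trans ?_) hp0.le
          exact mul_le_mul_right hS _
      _ = K ^ (-(r:ℝ)*p) * (T1 x * ((a ^ (2:ℝ) * K ^ (r:ℝ)) ^ ((1/q)*p))) := by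
          rw [ENNReal.mul_rpow_of_nonneg _ _ hp0.le, ENNReal.mul_rpow_of_nonneg _ _ hp0.le,
            ← ENNReal.rpow_mul, ← ENNReal.rpow_mul, ← ENNReal.rpow_mul,
            one_div_mul_cancel hp0.ne', ENNReal.rpow_one]
      _ = (a ^ ((2:ℝ)*(p-1)) * K ^ (-(r:ℝ))) * T1 x := by
          rw [show (1/q)*p = p/q by ring, hpq.div_conj_eq_sub_one,
            ENNReal.mul_rpow_of_nonneg _ _ hp1, ← ENNReal.rpow_mul, ← ENNReal.rpow_mul]
          have hcomb : K ^ (-(r:ℝ)*p) * K ^ ((r:ℝ)*(p-1)) = K ^ (-(r:ℝ)) := by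
            rw [← ENNReal.rpow_add _ _ hK0 hKt]
            congr 1
            ring
          rw [← hcomb]
          ring
  set C2 : ℝ≥0∞ := (a ^ (2:ℝ) * K ^ (r:ℝ)) ^ (1/s)
      * (a ^ (2:ℝ) * K ^ ((r:ℝ)*(1-θ*t))) ^ (1/t) with hC2
  set Inner : V k → ℝ≥0∞ := fun y => ∑' x : V k, (ball y r).indicator
    (fun x => w x * K ^ (-θ * ((x.length - lcpLen y x : ℕ) : ℝ))) x with hInner
  have hswap : (∑' x : V k, w x * T1 x) = ∑' y : V k, g y ^ p * Inner y := by
    have h1 : ∀ x : V k, w x * T1 x = ∑' y : V k, w x * ((ball x r).indicator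
        (fun y => g y ^ p * K ^ (-θ * ((x.length - lcpLen x y : ℕ) : ℝ))) y) := by
      intro x
      rw [hT1]
      exact (ENNReal.tsum_mul_left).symm
    rw [tsum_congr h1, ENNReal.tsum_comm]
    refine tsum_congr fun y => ?_
    rw [hInner, ← ENNReal.tsum_mul_left]
    refine tsum_congr fun x => ?_
    by_cases h : y ∈ ball x r
    · have h' : x ∈ ball y r := mem_ball_comm.mp h
      rw [Set.indicator_of_mem h, Set.indicator_of_mem h', lcpLen_comm y x]
      ring
    · have h' : x ∉ ball y r := fun hc => h (mem_ball_comm.mpr hc)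
      rw [Set.indicator_of_notMem h, Set.indicator_of_notMem h']
      simp
  have hcol : ∀ y : V k, Inner y ≤ C2 * MsBall s w y := by
    intro y
    set F3 : V k → ℝ≥0∞ := fun x => (ball y r).indicator w x with hF3
    set F4 : V k → ℝ≥0∞ := fun x => (ball y r).indicator
      (fun x => K ^ (-θ * ((x.length - lcpLen y x : ℕ) : ℝ))) x with hF4
    have hprod : ∀ x : V k, (ball y r).indicator
        (fun x => w x * K ^ (-θ * ((x.length - lcpLen y x : ℕ) : ℝ))) x = F3 x * F4 x := by
      intro x
      by_cases h : x ∈ ball y r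
      · rw [hF3, hF4]
        simp only [Set.indicator_of_mem h]
      · rw [hF3, hF4]
        simp only [Set.indicator_of_notMem h, zero_mul]
    have hF3s : ∑' x, F3 x ^ s ≤ (a ^ (2:ℝ) * K ^ (r:ℝ)) * Mball (fun z => w z ^ s) y := by
      calc ∑' x, F3 x ^ s = ∑' x, (ball y r).indicator (fun z => w z ^ s) x :=
            tsum_congr fun x => by rw [hF3, indicator_rpow hs0]
        _ = wsum (fun z => w z ^ s) (ball y r) := (wsum_eq_tsum_indicator _ _).symm
        _ ≤ ballCard y r * Mball (fun z => w z ^ s) y := wsum_le_mul_Mball _ y r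
        _ ≤ (a ^ (2:ℝ) * K ^ (r:ℝ)) * Mball (fun z => w z ^ s) y :=
            mul_le_mul_left (ballCard_le hk1 y r) _
    have hF4t : ∑' x, F4 x ^ t ≤ a ^ (2:ℝ) * K ^ ((r:ℝ)*(1-θ*t)) := by
      have he : ∀ x : V k, F4 x ^ t = (ball y r).indicator
          (fun x => K ^ (-(θ*t) * ((x.length - lcpLen y x : ℕ) : ℝ))) x := by
        intro x
        rw [hF4, indicator_rpow ht0]
        refine congrFun (congrArg _ (funext fun z => ?_)) x
        rw [← ENNReal.rpow_mul]
        congr 1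
        ring
      rw [tsum_congr he]
      exact col_bound hk1 y r (by positivity) hθ2
    calc Inner y = ∑' x, F3 x * F4 x := tsum_congr hprod
      _ ≤ ((a ^ (2:ℝ) * K ^ (r:ℝ)) * Mball (fun z => w z ^ s) y) ^ (1/s)
            * (a ^ (2:ℝ) * K ^ ((r:ℝ)*(1-θ*t))) ^ (1/t) := holder_plain hst F3 F4 hF3s hF4t
      _ = C2 * MsBall s w y := by
          rw [ENNReal.mul_rpow_of_nonneg _ _ (by positivity : (0:ℝ) ≤ 1/s), hC2, MsBall]
          ring
  have hconst : (a ^ ((2:ℝ)*(p-1)) * K ^ (-(r:ℝ))) * C2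
      ≤ a ^ ((2:ℝ)*p + 2) * K ^ (-θ * (r:ℝ)) := by
    have hinv : 1/s + 1/t = 1 := by
      rw [one_div, one_div]
      exact hst.inv_add_inv_eq_one
    have e1 : (a ^ (2:ℝ) * K ^ (r:ℝ)) ^ (1/s)
        = a ^ ((2:ℝ)*(1/s)) * K ^ ((r:ℝ)*(1/s)) := by
      rw [ENNReal.mul_rpow_of_nonneg _ _ (by positivity : (0:ℝ) ≤ 1/s),
        ← ENNReal.rpow_mul, ← ENNReal.rpow_mul]
    have e2 : (a ^ (2:ℝ) * K ^ ((r:ℝ)*(1-θ*t))) ^ (1/t)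
        = a ^ ((2:ℝ)*(1/t)) * K ^ (((r:ℝ)*(1-θ*t))*(1/t)) := by
      rw [ENNReal.mul_rpow_of_nonneg _ _ (by positivity : (0:ℝ) ≤ 1/t),
        ← ENNReal.rpow_mul, ← ENNReal.rpow_mul]
    have acomb : a ^ ((2:ℝ)*(p-1)) * (a ^ ((2:ℝ)*(1/s)) * a ^ ((2:ℝ)*(1/t)))
        = a ^ ((2:ℝ)*p) := by
      rw [← ENNReal.rpow_add _ _ ha0 hat, ← ENNReal.rpow_add _ _ ha0 hat]
      congr 1
      have : (2:ℝ)*(1/s) + (2:ℝ)*(1/t) = 2 := by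
        have := hinv
        linarith
      linarith
    have kcomb : K ^ (-(r:ℝ)) * (K ^ ((r:ℝ)*(1/s)) * K ^ (((r:ℝ)*(1-θ*t))*(1/t)))
        = K ^ (-θ * (r:ℝ)) := by
      rw [← ENNReal.rpow_add _ _ hK0 hKt, ← ENNReal.rpow_add _ _ hK0 hKt]
      congr 1
      have h3 : ((r:ℝ)*(1-θ*t))*(1/t) = (r:ℝ)*(1/t) - θ*(r:ℝ) := by
        field_simp
      have h4 : (r:ℝ)*(1/s) + (r:ℝ)*(1/t) = (r:ℝ) := by
        rw [← mul_add, hinv, mul_one]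
      rw [h3]
      linarith
    calc (a ^ ((2:ℝ)*(p-1)) * K ^ (-(r:ℝ))) * C2
        = (a ^ ((2:ℝ)*(p-1)) * (a ^ ((2:ℝ)*(1/s)) * a ^ ((2:ℝ)*(1/t))))
            * (K ^ (-(r:ℝ)) * (K ^ ((r:ℝ)*(1/s)) * K ^ (((r:ℝ)*(1-θ*t))*(1/t)))) := by
          rw [hC2, e1, e2]
          ring
      _ = a ^ ((2:ℝ)*p) * K ^ (-θ * (r:ℝ)) := by rw [acomb, kcomb]
      _ ≤ a ^ ((2:ℝ)*p + 2) * K ^ (-θ * (r:ℝ)) := by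
          refine mul_le_mul_left (ENNReal.rpow_le_rpow_of_exponent_le ha1 (by linarith)) _
  calc (∑' x : V k, w x * (wsum g (ball x r) / ballCard x r) ^ p)
      ≤ ∑' x : V k, w x * ((a ^ ((2:ℝ)*(p-1)) * K ^ (-(r:ℝ))) * T1 x) :=
        ENNReal.tsum_le_tsum fun x => mul_le_mul_right (hAx x) _
    _ = (a ^ ((2:ℝ)*(p-1)) * K ^ (-(r:ℝ))) * ∑' x : V k, w x * T1 x := by
        rw [← ENNReal.tsum_mul_left]
        exact tsum_congr fun x => by ring
    _ = (a ^ ((2:ℝ)*(p-1)) * K ^ (-(r:ℝ))) * ∑' y : V k, g y ^ p * Inner y := by rw [hswap]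
    _ ≤ (a ^ ((2:ℝ)*(p-1)) * K ^ (-(r:ℝ)))
          * (C2 * ∑' y : V k, g y ^ p * MsBall s w y) := by
        refine mul_le_mul_right ?_ _
        rw [← ENNReal.tsum_mul_left]
        refine ENNReal.tsum_le_tsum fun y => ?_
        calc g y ^ p * Inner y ≤ g y ^ p * (C2 * MsBall s w y) := mul_le_mul_right (hcol y) _
          _ = C2 * (g y ^ p * MsBall s w y) := by ring
    _ ≤ a ^ ((2:ℝ)*p + 2) * K ^ (-θ * (r:ℝ)) * ∑' y : V k, g y ^ p * MsBall s w y := by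
        rw [← mul_assoc]
        exact mul_le_mul_left hconst _

end FS


/-- Strong `L^p` Fefferman–Stein estimate: for `1 < p < ∞` and `1 < s < ∞`,
`(Σ (Mf)^p w)^{1/p} ≤ c_s (Σ |f|^p M_s w)^{1/p}`. -/
theorem stmt14 (p s : ℝ) (hp : 1 < p) (hs : 1 < s) :
    ∃ c : ℝ≥0, ∀ (k : ℕ), 2 ≤ k → ∀ (w : V k → ℝ≥0∞) (f : V k → ℝ),
      (∑' x : V k, (Mball (absE f) x) ^ p * w x) ^ (1 / p) ≤
        (c : ℝ≥0∞) * (∑' x : V k, (ENNReal.ofReal |f x|) ^ p * MsBall s w x) ^ (1 / p) := by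
  classical
  have hpq : p.HolderConjugate (Real.conjExponent p) := Real.HolderConjugate.conjExponent hp
  have hst : s.HolderConjugate (Real.conjExponent s) := Real.HolderConjugate.conjExponent hs
  set q := Real.conjExponent p with hqdef
  set t := Real.conjExponent s with htdef
  have hp0 : 0 < p := hpq.pos
  have hq0 : 0 < q := hpq.symm.pos
  have ht0 : 0 < t := hst.symm.pos
  set θ : ℝ := min (p - 1) (1/t) with hθdef
  have hθ0 : 0 < θ := lt_min (by linarith) (by positivity)
  have hθ1 : θ * q ≤ p := by
    calc θ * q ≤ (p - 1) * q := mul_le_mul_of_nonneg_right (min_le_left _ _) hq0.le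
      _ = p := hpq.sub_one_mul_conj
  have hθ2 : θ * t ≤ 1 := by
    calc θ * t ≤ (1/t) * t := mul_le_mul_of_nonneg_right (min_le_right _ _) ht0.le
      _ = 1 := by field_simp
  set D : ℝ≥0∞ := ∑' r : ℕ, ((r+1:ℕ) : ℝ≥0∞) ^ ((2:ℝ)*p + 2) * (2:ℝ≥0∞) ^ (-θ * (r:ℝ))
    with hDdef
  have hD : D ≠ ⊤ := FS.series_fin ((2:ℝ)*p + 2) hθ0
  have hD1p : D ^ (1/p) ≠ ⊤ := ENNReal.rpow_ne_top_of_nonneg (by positivity) hD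
  refine ⟨(D ^ (1/p)).toNNReal, ?_⟩
  intro k hk w f
  have hcoe : ((D ^ (1/p)).toNNReal : ℝ≥0∞) = D ^ (1/p) := ENNReal.coe_toNNReal hD1p
  rw [hcoe]
  set g : V k → ℝ≥0∞ := absE f with hg
  set RHS : ℝ≥0∞ := ∑' y : V k, g y ^ p * MsBall s w y with hRHS
  have hRHSeq : (∑' x : V k, (ENNReal.ofReal |f x|) ^ p * MsBall s w x) = RHS := rfl
  rw [hRHSeq]
  have h2K : (2:ℝ≥0∞) ≤ (k:ℝ≥0∞) := by exact_mod_cast hk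
  have hKr : ∀ r : ℕ, (k:ℝ≥0∞) ^ (-θ * (r:ℝ)) ≤ (2:ℝ≥0∞) ^ (-θ * (r:ℝ)) := by
    intro r
    rw [show -θ * (r:ℝ) = -(θ * (r:ℝ)) by ring, ENNReal.rpow_neg, ENNReal.rpow_neg]
    exact ENNReal.inv_le_inv.mpr (ENNReal.rpow_le_rpow h2K (by positivity))
  have hmain : (∑' x : V k, (Mball g x) ^ p * w x) ≤ D * RHS := by
    calc (∑' x : V k, (Mball g x) ^ p * w x)
        ≤ ∑' x : V k, (∑' r : ℕ, (wsum g (ball x r) / ballCard x r) ^ p) * w x := by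
          refine ENNReal.tsum_le_tsum fun x => mul_le_mul_left ?_ _
          exact FS.iSup_rpow_le_tsum hp0 (fun r => wsum g (ball x r) / ballCard x r)
      _ = ∑' x : V k, ∑' r : ℕ, (wsum g (ball x r) / ballCard x r) ^ p * w x := by
          exact tsum_congr fun x => (ENNReal.tsum_mul_right).symm
      _ = ∑' r : ℕ, ∑' x : V k, w x * (wsum g (ball x r) / ballCard x r) ^ p := by
          rw [ENNReal.tsum_comm]
          exact tsum_congr fun r => tsum_congr fun x => mul_comm _ _
      _ ≤ ∑' r : ℕ, ((r+1:ℕ) : ℝ≥0∞) ^ ((2:ℝ)*p + 2) * (k:ℝ≥0∞) ^ (-θ * (r:ℝ)) * RHS := by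
          refine ENNReal.tsum_le_tsum fun r => ?_
          exact FS.core hk hpq hst hθ0 hθ1 hθ2 w g r
      _ ≤ ∑' r : ℕ, ((r+1:ℕ) : ℝ≥0∞) ^ ((2:ℝ)*p + 2) * (2:ℝ≥0∞) ^ (-θ * (r:ℝ)) * RHS := by
          refine ENNReal.tsum_le_tsum fun r => ?_
          exact mul_le_mul_left (mul_le_mul_right (hKr r) _) _
      _ = D * RHS := by
          rw [hDdef, ← ENNReal.tsum_mul_right]
  calc (∑' x : V k, (Mball g x) ^ p * w x) ^ (1/p)
      ≤ (D * RHS) ^ (1/p) := ENNReal.rpow_le_rpow hmain (by positivity)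
    _ = D ^ (1/p) * RHS ^ (1/p) := ENNReal.mul_rpow_of_nonneg _ _ (by positivity)
end
end

section
/- Let T be the infinite rooted k-ary tree with k ≥ 2 and 1 < q ≤ p < ∞. Then the vector-valued maximal inequality ‖(Σ_{j=1}^∞ (Mf_j)^q)^{1/q}‖_{L^p(T)} ≤ c_{p,q} ‖(Σ_{j=1}^∞ |f_j|^q)^{1/q}‖_{L^p(T)} holds for all sequences (f_j) of functions on T. -/
open scoped ENNReal NNReal BigOperators

noncomputable section

namespace Stmt15
variable {k : ℕ}

lemma lcpLen_comm (a b : List (Fin k)) : lcpLen a b = lcpLen b a := by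
  induction a generalizing b with
  | nil => cases b <;> simp [lcpLen]
  | cons x xs ih =>
    cases b with
    | nil => simp [lcpLen]
    | cons y ys =>
      by_cases h : x = y
      · subst h; simp [lcpLen, ih]
      · simp [lcpLen, h, Ne.symm h]

lemma lcpLen_le_left (a b : List (Fin k)) : lcpLen a b ≤ a.length := by
  induction a generalizing b with
  | nil => simp [lcpLen]
  | cons x xs ih =>
    cases b with
    | nil => simp [lcpLen]
    | cons y ys =>
      by_cases h : x = y
      · subst h; simpa [lcpLen] using ih ys
      · simp [lcpLen, h]

lemma lcpLen_le_right (a b : List (Fin k)) : lcpLen a b ≤ b.length := by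
  rw [lcpLen_comm]; exact lcpLen_le_left b a

lemma take_lcpLen (a b : List (Fin k)) :
    b.take (lcpLen a b) = a.take (lcpLen a b) := by
  induction a generalizing b with
  | nil => simp [lcpLen]
  | cons x xs ih =>
    cases b with
    | nil => simp [lcpLen]
    | cons y ys =>
      by_cases h : x = y
      · subst h; simp [lcpLen, ih]
      · simp [lcpLen, h]

lemma lcpLen_append (a w : List (Fin k)) : lcpLen a (a ++ w) = a.length := by
  induction a with
  | nil => simp [lcpLen]
  | cons x xs ih => simp [lcpLen, ih]

lemma tdist_comm (x y : V k) : tdist x y = tdist y x := by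
  unfold tdist; rw [lcpLen_comm]; omega

lemma tdist_append (x : V k) (w : List (Fin k)) : tdist x (x ++ w) = w.length := by
  simp [tdist, lcpLen_append]

lemma length_le_add_tdist (x y : V k) : y.length ≤ x.length + tdist x y := by
  have h1 := lcpLen_le_left x y
  have h2 := lcpLen_le_right x y
  unfold tdist; omega

lemma tdist_ge (x y : V k) : y.length - lcpLen x y ≤ tdist x y := by
  unfold tdist; omega


lemma holder_tsum {ι : Type*} (f g : ι → ℝ≥0∞) {p q : ℝ} (hpq : p.HolderConjugate q) :
    ∑' i, f i * g i ≤ (∑' i, f i ^ p) ^ (1 / p) * (∑' i, g i ^ q) ^ (1 / q) := by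
  rw [ENNReal.tsum_eq_iSup_sum]
  apply iSup_le
  intro s
  calc ∑ i ∈ s, f i * g i
      ≤ (∑ i ∈ s, f i ^ p) ^ (1 / p) * (∑ i ∈ s, g i ^ q) ^ (1 / q) :=
        ENNReal.inner_le_Lp_mul_Lq s f g hpq
    _ ≤ (∑' i, f i ^ p) ^ (1 / p) * (∑' i, g i ^ q) ^ (1 / q) :=
        mul_le_mul' (ENNReal.rpow_le_rpow (ENNReal.sum_le_tsum s) hpq.one_div_nonneg)
          (ENNReal.rpow_le_rpow (ENNReal.sum_le_tsum s) hpq.symm.one_div_nonneg)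

lemma iSup_rpow {ι : Sort*} (b : ι → ℝ≥0∞) {q : ℝ} (hq : 0 < q) :
    (⨆ i, b i) ^ q = ⨆ i, b i ^ q := by
  apply le_antisymm
  · have h1 : (⨆ i, b i) ≤ (⨆ i, b i ^ q) ^ (1 / q) := by
      apply iSup_le
      intro i
      have e : b i = (b i ^ q) ^ (1 / q) := by
        rw [← ENNReal.rpow_mul, mul_one_div_cancel hq.ne', ENNReal.rpow_one]
      rw [e]
      exact ENNReal.rpow_le_rpow (le_iSup (fun i => b i ^ q) i) (by positivity)
    calc (⨆ i, b i) ^ q ≤ ((⨆ i, b i ^ q) ^ (1 / q)) ^ q := ENNReal.rpow_le_rpow h1 hq.le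
      _ = ⨆ i, b i ^ q := by
        rw [← ENNReal.rpow_mul, one_div_mul_cancel hq.ne', ENNReal.rpow_one]
  · exact iSup_le fun i => ENNReal.rpow_le_rpow (le_iSup b i) hq.le

lemma mink2 {ι : Type*} (b c : ι → ℝ≥0∞) {q : ℝ} (hq : 1 ≤ q) :
    (∑' j, (b j + c j) ^ q) ^ (1 / q) ≤
      (∑' j, b j ^ q) ^ (1 / q) + (∑' j, c j ^ q) ^ (1 / q) := by
  have hq0 : (0 : ℝ) < q := lt_of_lt_of_le one_pos hq
  rw [ENNReal.tsum_eq_iSup_sum, iSup_rpow _ (by positivity : (0:ℝ) < 1 / q)]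
  apply iSup_le
  intro s
  calc (∑ j ∈ s, (b j + c j) ^ q) ^ (1 / q)
      ≤ (∑ j ∈ s, b j ^ q) ^ (1 / q) + (∑ j ∈ s, c j ^ q) ^ (1 / q) :=
        ENNReal.Lp_add_le s b c hq
    _ ≤ (∑' j, b j ^ q) ^ (1 / q) + (∑' j, c j ^ q) ^ (1 / q) :=
        add_le_add (ENNReal.rpow_le_rpow (ENNReal.sum_le_tsum s) (by positivity))
          (ENNReal.rpow_le_rpow (ENNReal.sum_le_tsum s) (by positivity))

lemma mink_finset {ι κ : Type*} (a : ι → κ → ℝ≥0∞) {q : ℝ} (hq : 1 ≤ q) (s : Finset κ) :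
    (∑' j, (∑ y ∈ s, a j y) ^ q) ^ (1 / q) ≤ ∑ y ∈ s, (∑' j, a j y ^ q) ^ (1 / q) := by
  classical
  have hq0 : (0 : ℝ) < q := lt_of_lt_of_le one_pos hq
  induction s using Finset.cons_induction with
  | empty =>
    simp [ENNReal.zero_rpow_of_pos hq0, ENNReal.zero_rpow_of_pos, hq0]
  | cons y s hys ih =>
    simp only [Finset.sum_cons]
    calc (∑' j, (a j y + ∑ z ∈ s, a j z) ^ q) ^ (1 / q)
        ≤ (∑' j, a j y ^ q) ^ (1 / q) + (∑' j, (∑ z ∈ s, a j z) ^ q) ^ (1 / q) :=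
          mink2 _ _ hq
      _ ≤ (∑' j, a j y ^ q) ^ (1 / q) + ∑ z ∈ s, (∑' j, a j z ^ q) ^ (1 / q) :=
          add_le_add le_rfl ih

lemma mink {ι κ : Type*} [Countable κ] (a : ι → κ → ℝ≥0∞) {q : ℝ} (hq : 1 ≤ q) :
    (∑' j, (∑' y, a j y) ^ q) ^ (1 / q) ≤ ∑' y, (∑' j, a j y ^ q) ^ (1 / q) := by
  classical
  have hq0 : (0 : ℝ) < q := lt_of_lt_of_le one_pos hq
  letI : MeasurableSpace ι := ⊤
  haveI : MeasurableSingletonClass ι := ⟨fun _ => trivial⟩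
  have swap : ∑' j, (∑' y, a j y) ^ q
      = ⨆ s : Finset κ, ∑' j, (∑ y ∈ s, a j y) ^ q := by
    have h1 : ∀ j, (∑' y, a j y) ^ q = ⨆ s : Finset κ, (∑ y ∈ s, a j y) ^ q := by
      intro j
      rw [ENNReal.tsum_eq_iSup_sum, iSup_rpow _ hq0]
    have hmono : Monotone (fun (s : Finset κ) (j : ι) => (∑ y ∈ s, a j y) ^ q) := by
      intro s t hst
      intro j
      exact ENNReal.rpow_le_rpow (Finset.sum_le_sum_of_subset hst) hq0.le
    calc ∑' j, (∑' y, a j y) ^ q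
        = ∑' j, ⨆ s : Finset κ, (∑ y ∈ s, a j y) ^ q := tsum_congr h1
      _ = ∫⁻ j, ⨆ s : Finset κ, (∑ y ∈ s, a j y) ^ q ∂MeasureTheory.Measure.count :=
          (MeasureTheory.lintegral_count _).symm
      _ = ⨆ s : Finset κ, ∫⁻ j, (∑ y ∈ s, a j y) ^ q ∂MeasureTheory.Measure.count := by
          apply MeasureTheory.lintegral_iSup_directed
          · intro s
            exact (Measurable.of_comap_le le_top).aemeasurable
          · exact hmono.directed_le
      _ = ⨆ s : Finset κ, ∑' j, (∑ y ∈ s, a j y) ^ q := by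
          apply iSup_congr
          intro s
          exact MeasureTheory.lintegral_count _
  rw [swap, iSup_rpow _ (by positivity : (0:ℝ) < 1 / q)]
  apply iSup_le
  intro s
  exact (mink_finset a hq s).trans (ENNReal.sum_le_tsum s)


/-- The kernel `k^{-d(x,y)}`. -/
def Ker {k : ℕ} (x y : V k) : ℝ≥0∞ := ((k : ℝ≥0∞))⁻¹ ^ (tdist x y)

/-- The comparison operator `T g (x) = Σ_y k^{-d(x,y)} g(y)`. -/
def Top {k : ℕ} (g : V k → ℝ≥0∞) (x : V k) : ℝ≥0∞ := ∑' y, Ker x y * g y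

lemma Ker_comm (x y : V k) : Ker x y = Ker y x := by rw [Ker, Ker, tdist_comm]

lemma tsum_subtype_le' (g : V k → ℝ≥0∞) (A : Set (V k)) :
    ∑' y : A, g ↑y ≤ ∑' y, g y :=
  Summable.tsum_le_tsum_of_inj (Subtype.val) Subtype.val_injective (fun _ _ => zero_le)
    (fun _ => le_rfl) ENNReal.summable ENNReal.summable

lemma ball_finite (x : V k) (r : ℕ) : (ball x r).Finite := by
  apply (List.finite_length_le (Fin k) (x.length + r)).subset
  intro y hy
  exact le_trans (length_le_add_tdist x y) (Nat.add_le_add_left hy _)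

lemma pow_le_ballCard (x : V k) (r : ℕ) : (k : ℝ≥0∞) ^ r ≤ ballCard x r := by
  classical
  set F : List.Vector (Fin k) r → V k := fun w => x ++ w.toList with hF
  have hinj : Function.Injective F := by
    intro a b h
    exact List.Vector.toList_injective (List.append_cancel_left h)
  have hsub : Set.range F ⊆ ball x r := by
    rintro _ ⟨w, rfl⟩
    show tdist x (x ++ w.toList) ≤ r
    rw [tdist_append, w.toList_length]
  have hcard : (Set.range F).ncard = k ^ r := by
    rw [← Nat.card_coe_set_eq, Nat.card_range_of_injective hinj,
      Nat.card_eq_fintype_card, card_vector, Fintype.card_fin]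
  have h := Set.ncard_le_ncard hsub (ball_finite x r)
  rw [hcard] at h
  calc (k : ℝ≥0∞) ^ r = ((k ^ r : ℕ) : ℝ≥0∞) := by push_cast; ring
    _ ≤ ((ball x r).ncard : ℝ≥0∞) := by exact_mod_cast h

lemma Mball_le_Top (hk : 2 ≤ k) (f : V k → ℝ≥0∞) (x : V k) :
    Mball f x ≤ Top f x := by
  apply iSup_le
  intro r
  have hk1 : (1 : ℝ≥0∞) ≤ (k : ℝ≥0∞) := by
    exact_mod_cast Nat.one_le_cast.mpr (le_trans (by norm_num) hk)
  calc wsum f (ball x r) / ballCard x r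
      ≤ wsum f (ball x r) / (k : ℝ≥0∞) ^ r :=
        ENNReal.div_le_div_left (pow_le_ballCard x r) _
    _ = ∑' y : ball x r, f ↑y * ((k : ℝ≥0∞) ^ r)⁻¹ := by
        rw [wsum, div_eq_mul_inv, ENNReal.tsum_mul_right]
    _ ≤ ∑' y : ball x r, Ker x ↑y * f ↑y := by
        apply ENNReal.tsum_le_tsum
        intro y
        rw [mul_comm]
        apply mul_le_mul_left
        rw [Ker, ← ENNReal.inv_pow]
        exact ENNReal.inv_le_inv.mpr (pow_le_pow_right' hk1 y.2)
    _ ≤ Top f x := tsum_subtype_le' _ _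


lemma pow_identity {κ ρ : ℝ≥0∞} (hρ0 : ρ ≠ 0) (hρt : ρ ≠ ∞) {i m : ℕ} (him : i ≤ m) :
    (κ * ρ⁻¹) ^ i * ρ ^ m = κ ^ i * ρ ^ (m - i) := by
  have h1 : ρ ^ m = ρ ^ i * ρ ^ (m - i) := by rw [← pow_add]; congr 1; omega
  calc (κ * ρ⁻¹) ^ i * ρ ^ m = (κ ^ i * ρ ^ (m - i)) * ((ρ⁻¹) ^ i * ρ ^ i) := by
        rw [h1, mul_pow]; ring
    _ = κ ^ i * ρ ^ (m - i) := by
        rw [← mul_pow, ENNReal.inv_mul_cancel hρ0 hρt, one_pow, mul_one]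

/-- Schur test row bound: `Σ_y k^{-d(x,y)} ρ^{|y|} ≤ C ρ^{|x|}`. -/
lemma row_bound (hk : 2 ≤ k) {ρ : ℝ≥0∞} (hρ1 : ρ < 1) (hρ2 : (k : ℝ≥0∞)⁻¹ < ρ) (x : V k) :
    ∑' y : V k, Ker x y * ρ ^ y.length ≤
      ((1 - (k : ℝ≥0∞)⁻¹ * ρ⁻¹)⁻¹ * (1 - ρ)⁻¹) * ρ ^ x.length := by
  classical
  set κ : ℝ≥0∞ := (k : ℝ≥0∞)⁻¹ with hκ
  set m : ℕ := x.length with hm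
  have hk0 : (k : ℝ≥0∞) ≠ 0 := Nat.cast_ne_zero.mpr (by omega)
  have hkt : (k : ℝ≥0∞) ≠ ∞ := ENNReal.natCast_ne_top k
  have hρ0 : ρ ≠ 0 := fun h => by simp [h] at hρ2
  have hρt : ρ ≠ ∞ := hρ1.ne_top
  -- the injection
  set φ : V k → Fin (m + 1) × List (Fin k) :=
    fun y => (⟨lcpLen x y, by have := lcpLen_le_left x y; omega⟩, y.drop (lcpLen x y)) with hφ
  have hinj : Function.Injective φ := by
    intro y₁ y₂ h
    have h1 : lcpLen x y₁ = lcpLen x y₂ := congrArg (fun z => (z.1 : ℕ)) h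
    have h2 : y₁.drop (lcpLen x y₁) = y₂.drop (lcpLen x y₂) := congrArg Prod.snd h
    have e1 : y₁ = x.take (lcpLen x y₁) ++ y₁.drop (lcpLen x y₁) := by
      conv_lhs => rw [← List.take_append_drop (lcpLen x y₁) y₁]
      rw [take_lcpLen]
    have e2 : y₂ = x.take (lcpLen x y₂) ++ y₂.drop (lcpLen x y₂) := by
      conv_lhs => rw [← List.take_append_drop (lcpLen x y₂) y₂]
      rw [take_lcpLen]
    have h2' := h2
    rw [h1] at h2'
    rw [e1, h1, h2']
    exact e2.symm
  -- the dominating function on the product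
  set G : Fin (m + 1) × List (Fin k) → ℝ≥0∞ :=
    fun jt => (κ ^ (m - (jt.1 : ℕ)) * ρ ^ (jt.1 : ℕ)) * (κ * ρ) ^ jt.2.length with hG
  have hval : ∀ y : V k, Ker x y * ρ ^ y.length = G (φ y) := by
    intro y
    have hj1 : lcpLen x y ≤ m := lcpLen_le_left x y
    have hj2 : lcpLen x y ≤ y.length := lcpLen_le_right x y
    have hlen : (y.drop (lcpLen x y)).length = y.length - lcpLen x y := by
      simp [List.length_drop]
    have hsplit : y.length = lcpLen x y + (y.length - lcpLen x y) := by omega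
    show κ ^ tdist x y * ρ ^ y.length = _
    rw [hG]
    simp only [hφ, hlen]
    rw [tdist, pow_add]
    conv_lhs => rw [hsplit, pow_add]
    simp only [Nat.add_sub_cancel_left]
    ring
  calc ∑' y : V k, Ker x y * ρ ^ y.length
      ≤ ∑' jt : Fin (m + 1) × List (Fin k), G jt :=
        Summable.tsum_le_tsum_of_inj φ hinj (fun _ _ => zero_le)
          (fun y => le_of_eq (hval y)) ENNReal.summable ENNReal.summable
    _ = (∑' j : Fin (m + 1), κ ^ (m - (j : ℕ)) * ρ ^ (j : ℕ)) *
        (∑' t : List (Fin k), (κ * ρ) ^ t.length) := by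
        rw [ENNReal.tsum_prod']
        simp only [hG]
        simp_rw [ENNReal.tsum_mul_left, ENNReal.tsum_mul_right]
    _ ≤ ((1 - κ * ρ⁻¹)⁻¹ * ρ ^ m) * (1 - ρ)⁻¹ := by
        have hF2 : (∑' t : List (Fin k), (κ * ρ) ^ t.length) = (1 - ρ)⁻¹ := by
          have he : (∑' t : List (Fin k), (κ * ρ) ^ t.length) = ∑' n : ℕ, ρ ^ n := by
            rw [← (Equiv.sigmaFiberEquiv (fun l : List (Fin k) => l.length)).tsum_eq
              (fun t : List (Fin k) => (κ * ρ) ^ t.length), ENNReal.tsum_sigma']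
            apply tsum_congr
            intro n
            haveI : Fintype {l : List (Fin k) // l.length = n} :=
              inferInstanceAs (Fintype (List.Vector (Fin k) n))
            have hterm : ∀ l : {l : List (Fin k) // l.length = n},
                (κ * ρ) ^ ((Equiv.sigmaFiberEquiv
                  (fun l : List (Fin k) => l.length)) ⟨n, l⟩ : List (Fin k)).length
                  = (κ * ρ) ^ n := by
              intro l
              simp [Equiv.sigmaFiberEquiv, l.2]
            rw [tsum_congr hterm, tsum_fintype, Finset.sum_const, nsmul_eq_mul]
            have hcard : (Fintype.card {l : List (Fin k) // l.length = n}) = k ^ n := by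
              rw [← Nat.card_eq_fintype_card]
              have hv : Nat.card (List.Vector (Fin k) n) = k ^ n := by
                rw [Nat.card_eq_fintype_card, card_vector, Fintype.card_fin]
              exact hv
            rw [Finset.card_univ, hcard]
            push_cast
            rw [mul_pow, ← mul_assoc, ← mul_pow, ENNReal.mul_inv_cancel hk0 hkt, one_pow,
              one_mul]
          rw [he, ENNReal.tsum_geometric]
        have hF1 : (∑' j : Fin (m + 1), κ ^ (m - (j : ℕ)) * ρ ^ (j : ℕ))
            ≤ (1 - κ * ρ⁻¹)⁻¹ * ρ ^ m := by
          have h := Summable.tsum_le_tsum_of_inj (fun j : Fin (m + 1) => m - (j : ℕ))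
            (fun j₁ j₂ h => by
              have hj1 : (j₁ : ℕ) < m + 1 := j₁.isLt
              have hj2 : (j₂ : ℕ) < m + 1 := j₂.isLt
              have h' : m - (j₁ : ℕ) = m - (j₂ : ℕ) := h
              exact Fin.ext (by omega))
            (fun (i : ℕ) _ => (zero_le : 0 ≤ (fun i : ℕ => (κ * ρ⁻¹) ^ i * ρ ^ m) i))
            (fun j : Fin (m + 1) => by
              have hj : (j : ℕ) < m + 1 := j.isLt
              have e : (κ * ρ⁻¹) ^ (m - (j : ℕ)) * ρ ^ m
                  = κ ^ (m - (j : ℕ)) * ρ ^ (j : ℕ) := by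
                rw [pow_identity hρ0 hρt (Nat.sub_le m _),
                  show m - (m - (j : ℕ)) = (j : ℕ) from by omega]
              exact le_of_eq e.symm)
            ENNReal.summable ENNReal.summable
          calc (∑' j : Fin (m + 1), κ ^ (m - (j : ℕ)) * ρ ^ (j : ℕ))
              ≤ ∑' i : ℕ, (κ * ρ⁻¹) ^ i * ρ ^ m := h
            _ = (1 - κ * ρ⁻¹)⁻¹ * ρ ^ m := by
                rw [ENNReal.tsum_mul_right, ENNReal.tsum_geometric]
        rw [hF2]
        exact mul_le_mul_left hF1 _
    _ = ((1 - κ * ρ⁻¹)⁻¹ * (1 - ρ)⁻¹) * ρ ^ m := by ring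

end Stmt15

namespace Stmt15
variable {k : ℕ}

lemma Ker_ne_zero (hk : 2 ≤ k) (x y : V k) : Ker x y ≠ 0 :=
  pow_ne_zero _ (ENNReal.inv_ne_zero.mpr (ENNReal.natCast_ne_top k))

lemma Ker_ne_top (hk : 2 ≤ k) (x y : V k) : Ker x y ≠ ∞ :=
  ENNReal.pow_ne_top (ENNReal.inv_ne_top.mpr (Nat.cast_ne_zero.mpr (by omega)))

/-- The Schur test for the operator `Top`. -/
lemma schur (hk : 2 ≤ k) {p p' : ℝ} (hpq : p.HolderConjugate p')
    {ρ1 ρ2 : ℝ≥0∞} {u : V k → ℝ≥0∞}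
    (hu0 : ∀ y, u y ≠ 0) (hut : ∀ y, u y ≠ ∞)
    (hup' : ∀ y : V k, u y ^ p' = ρ1 ^ y.length) (hup : ∀ y : V k, u y ^ p = ρ2 ^ y.length)
    (hρ11 : ρ1 < 1) (hρ12 : (k : ℝ≥0∞)⁻¹ < ρ1)
    (hρ21 : ρ2 < 1) (hρ22 : (k : ℝ≥0∞)⁻¹ < ρ2) (g : V k → ℝ≥0∞) :
    ∑' x : V k, (Top g x) ^ p ≤
      ((((1 - (k : ℝ≥0∞)⁻¹ * ρ1⁻¹)⁻¹ * (1 - ρ1)⁻¹) ^ (p - 1)) *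
        ((1 - (k : ℝ≥0∞)⁻¹ * ρ2⁻¹)⁻¹ * (1 - ρ2)⁻¹)) * ∑' x : V k, (g x) ^ p := by
  classical
  set A : ℝ≥0∞ := (1 - (k : ℝ≥0∞)⁻¹ * ρ1⁻¹)⁻¹ * (1 - ρ1)⁻¹ with hA
  set B : ℝ≥0∞ := (1 - (k : ℝ≥0∞)⁻¹ * ρ2⁻¹)⁻¹ * (1 - ρ2)⁻¹ with hB
  have hp0 : (0 : ℝ) < p := hpq.pos
  have hp'0 : (0 : ℝ) < p' := hpq.symm.pos
  have hsum : 1 / p + 1 / p' = 1 := by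
    rw [one_div, one_div]; exact hpq.inv_add_inv_eq_one
  have hpp' : (1 / p') * p = p - 1 := by
    have h1 : p ≠ 0 := hp0.ne'
    have h2 : p - 1 ≠ 0 := hpq.sub_one_ne_zero
    have hc : p' = p / (p - 1) := hpq.conjugate_eq
    rw [hc]
    field_simp
  set W : V k → ℝ≥0∞ := fun x => ∑' y, Ker x y * ((g y) ^ p * ((u y)⁻¹) ^ p) with hW
  -- pointwise bound via Hölder
  have pointwise : ∀ x : V k, Top g x ≤ (A * ρ1 ^ x.length) ^ (1 / p') * (W x) ^ (1 / p) := by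
    intro x
    have hsplit : ∀ y, Ker x y * g y
        = (Ker x y ^ (1 / p) * (g y * (u y)⁻¹)) * (Ker x y ^ (1 / p') * u y) := by
      intro y
      have h1 : Ker x y ^ (1 / p) * Ker x y ^ (1 / p') = Ker x y := by
        rw [← ENNReal.rpow_add _ _ (Ker_ne_zero hk x y) (Ker_ne_top hk x y), hsum,
          ENNReal.rpow_one]
      have h2 : (u y)⁻¹ * u y = 1 := ENNReal.inv_mul_cancel (hu0 y) (hut y)
      calc Ker x y * g y
          = (Ker x y ^ (1 / p) * Ker x y ^ (1 / p')) * (g y * ((u y)⁻¹ * u y)) := by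
            rw [h1, h2, mul_one]
        _ = (Ker x y ^ (1 / p) * (g y * (u y)⁻¹)) * (Ker x y ^ (1 / p') * u y) := by ring
    have hHold := holder_tsum (fun y => Ker x y ^ (1 / p) * (g y * (u y)⁻¹))
      (fun y => Ker x y ^ (1 / p') * u y) hpq
    have hb : (∑' y, (Ker x y ^ (1 / p) * (g y * (u y)⁻¹)) ^ p) = W x := by
      apply tsum_congr
      intro y
      rw [ENNReal.mul_rpow_of_nonneg _ _ hp0.le, ENNReal.mul_rpow_of_nonneg _ _ hp0.le,
        ← ENNReal.rpow_mul, one_div_mul_cancel hp0.ne', ENNReal.rpow_one]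
    have ha : (∑' y, (Ker x y ^ (1 / p') * u y) ^ p') ≤ A * ρ1 ^ x.length := by
      have he : ∀ y : V k, (Ker x y ^ (1 / p') * u y) ^ p' = Ker x y * ρ1 ^ y.length := by
        intro y
        rw [ENNReal.mul_rpow_of_nonneg _ _ hp'0.le, ← ENNReal.rpow_mul,
          one_div_mul_cancel hp'0.ne', ENNReal.rpow_one, hup']
      rw [tsum_congr he]
      exact row_bound hk hρ11 hρ12 x
    calc Top g x = ∑' y, (Ker x y ^ (1 / p) * (g y * (u y)⁻¹)) * (Ker x y ^ (1 / p') * u y) :=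
          tsum_congr hsplit
      _ ≤ (W x) ^ (1 / p) * (∑' y, (Ker x y ^ (1 / p') * u y) ^ p') ^ (1 / p') := by
          rw [← hb]; exact hHold
      _ ≤ (W x) ^ (1 / p) * (A * ρ1 ^ x.length) ^ (1 / p') :=
          mul_le_mul' le_rfl (ENNReal.rpow_le_rpow ha (by positivity))
      _ = (A * ρ1 ^ x.length) ^ (1 / p') * (W x) ^ (1 / p) := by ring
  -- raise to the p-th power and sum
  have pointp : ∀ x : V k, (Top g x) ^ p ≤ (A ^ (p - 1) * (u x ^ p)) * W x := by
    intro x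
    calc (Top g x) ^ p ≤ ((A * ρ1 ^ x.length) ^ (1 / p') * (W x) ^ (1 / p)) ^ p :=
          ENNReal.rpow_le_rpow (pointwise x) hp0.le
      _ = (A * ρ1 ^ x.length) ^ ((1 / p') * p) * W x := by
          rw [ENNReal.mul_rpow_of_nonneg _ _ hp0.le, ← ENNReal.rpow_mul, ← ENNReal.rpow_mul,
            one_div_mul_cancel hp0.ne', ENNReal.rpow_one]
      _ = (A ^ (p - 1) * (u x ^ p)) * W x := by
          rw [hpp', ENNReal.mul_rpow_of_nonneg _ _ hpq.sub_one_pos.le]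
          congr 2
          rw [← hup' x, ← ENNReal.rpow_mul]
          have hc : p' * (p - 1) = p := by
            rw [hpq.conjugate_eq, div_mul_cancel₀ _ hpq.sub_one_ne_zero]
          rw [hc]
  calc ∑' x : V k, (Top g x) ^ p
      ≤ ∑' x : V k, (A ^ (p - 1) * (u x ^ p)) * W x := ENNReal.tsum_le_tsum pointp
    _ = A ^ (p - 1) * ∑' x : V k, (u x ^ p) * W x := by
        simp_rw [mul_assoc]; rw [ENNReal.tsum_mul_left]
    _ = A ^ (p - 1) * ∑' y : V k, ((g y) ^ p * ((u y)⁻¹) ^ p) * ∑' x : V k, Ker y x * (u x ^ p) := by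
        congr 1
        rw [hW]
        simp only []
        calc ∑' x, (u x ^ p) * ∑' y, Ker x y * ((g y) ^ p * ((u y)⁻¹) ^ p)
            = ∑' x, ∑' y, (u x ^ p) * (Ker x y * ((g y) ^ p * ((u y)⁻¹) ^ p)) := by
              apply tsum_congr; intro x; rw [ENNReal.tsum_mul_left]
          _ = ∑' y, ∑' x, (u x ^ p) * (Ker x y * ((g y) ^ p * ((u y)⁻¹) ^ p)) :=
              ENNReal.tsum_comm
          _ = ∑' y, ((g y) ^ p * ((u y)⁻¹) ^ p) * ∑' x, Ker y x * (u x ^ p) := by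
              apply tsum_congr; intro y
              have : ∀ x, (u x ^ p) * (Ker x y * ((g y) ^ p * ((u y)⁻¹) ^ p))
                  = ((g y) ^ p * ((u y)⁻¹) ^ p) * (Ker y x * (u x ^ p)) := by
                intro x; rw [Ker_comm y x]; ring
              rw [tsum_congr this, ENNReal.tsum_mul_left]
    _ ≤ A ^ (p - 1) * ∑' y : V k, ((g y) ^ p * ((u y)⁻¹) ^ p) * (B * ρ2 ^ y.length) := by
        apply mul_le_mul' le_rfl
        apply ENNReal.tsum_le_tsum
        intro y
        apply mul_le_mul' le_rfl
        have : ∀ x : V k, Ker y x * (u x ^ p) = Ker y x * ρ2 ^ x.length := by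
          intro x; rw [hup]
        rw [tsum_congr this]
        exact row_bound hk hρ21 hρ22 y
    _ = (A ^ (p - 1) * B) * ∑' y : V k, (g y) ^ p := by
        rw [mul_assoc]
        congr 1
        have : ∀ y : V k, ((g y) ^ p * ((u y)⁻¹) ^ p) * (B * ρ2 ^ y.length)
            = B * (g y) ^ p := by
          intro y
          rw [← hup y]
          have h2 : ((u y)⁻¹) ^ p * (u y) ^ p = 1 := by
            rw [← ENNReal.mul_rpow_of_nonneg _ _ hp0.le,
              ENNReal.inv_mul_cancel (hu0 y) (hut y), ENNReal.one_rpow]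
          calc (g y) ^ p * ((u y)⁻¹) ^ p * (B * (u y) ^ p)
              = B * (g y) ^ p * (((u y)⁻¹) ^ p * (u y) ^ p) := by ring
            _ = B * (g y) ^ p := by rw [h2, mul_one]
        rw [tsum_congr this, ENNReal.tsum_mul_left]


end Stmt15

open Stmt15

/-- Vector-valued maximal inequality on the infinite rooted `k`-ary tree:
for `1 < q ≤ p < ∞`, `‖(Σ_j (Mf_j)^q)^{1/q}‖_{L^p} ≤ c_{p,q} ‖(Σ_j |f_j|^q)^{1/q}‖_{L^p}`. -/
theorem stmt15 (k : ℕ) (hk : 2 ≤ k) (p q : ℝ) (hq : 1 < q) (hpq : q ≤ p) :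
    ∃ c : ℝ≥0, ∀ f : ℕ → V k → ℝ,
      (∑' x : V k, (∑' j : ℕ, (Mball (absE (f j)) x) ^ q) ^ (p / q)) ^ (1 / p) ≤
        (c : ℝ≥0∞) *
          (∑' x : V k, (∑' j : ℕ, (ENNReal.ofReal |f j x|) ^ q) ^ (p / q)) ^ (1 / p) := by
  classical
  have hp : 1 < p := lt_of_lt_of_le hq hpq
  have hq0 : (0 : ℝ) < q := by linarith
  have hp0 : (0 : ℝ) < p := by linarith
  set p' : ℝ := Real.conjExponent p with hp'def
  have hpq' : p.HolderConjugate p' := Real.HolderConjugate.conjExponent hp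
  have hp'0 : (0 : ℝ) < p' := hpq'.symm.pos
  set κ : ℝ≥0∞ := ((k : ℝ≥0∞))⁻¹ with hκdef
  have hk0 : (k : ℝ≥0∞) ≠ 0 := Nat.cast_ne_zero.mpr (by omega)
  have hkt : (k : ℝ≥0∞) ≠ ∞ := ENNReal.natCast_ne_top k
  have hκ0 : κ ≠ 0 := ENNReal.inv_ne_zero.mpr hkt
  have hκt : κ ≠ ∞ := ENNReal.inv_ne_top.mpr hk0
  have hκpos : 0 < κ := pos_iff_ne_zero.mpr hκ0
  have hκ1 : κ < 1 := ENNReal.inv_lt_one.mpr (by exact_mod_cast (by omega : 1 < k))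
  set c0 : ℝ := 1 / (p + p') with hc0def
  have hc0 : 0 < c0 := by rw [hc0def]; positivity
  have hc0p' : c0 * p' < 1 := by
    rw [hc0def]
    rw [div_mul_eq_mul_div, one_mul, div_lt_one (by positivity)]
    linarith
  have hc0p : c0 * p < 1 := by
    rw [hc0def]
    rw [div_mul_eq_mul_div, one_mul, div_lt_one (by positivity)]
    linarith
  set μ : ℝ≥0∞ := κ ^ (c0 : ℝ) with hμdef
  have hμ0 : μ ≠ 0 := (ENNReal.rpow_pos hκpos hκt).ne'
  have hμt : μ ≠ ∞ := ENNReal.rpow_ne_top_of_nonneg hc0.le hκt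
  set u : V k → ℝ≥0∞ := fun y => μ ^ y.length with hudef
  set ρ1 : ℝ≥0∞ := μ ^ (p' : ℝ) with hρ1def
  set ρ2 : ℝ≥0∞ := μ ^ (p : ℝ) with hρ2def
  have hρ1eq : ρ1 = κ ^ (c0 * p') := by rw [hρ1def, hμdef, ← ENNReal.rpow_mul]
  have hρ2eq : ρ2 = κ ^ (c0 * p) := by rw [hρ2def, hμdef, ← ENNReal.rpow_mul]
  have hρ11 : ρ1 < 1 := by rw [hρ1eq]; exact ENNReal.rpow_lt_one hκ1 (by positivity)
  have hρ21 : ρ2 < 1 := by rw [hρ2eq]; exact ENNReal.rpow_lt_one hκ1 (by positivity)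
  have hρ12 : κ < ρ1 := by
    rw [hρ1eq]
    calc κ = κ ^ (1 : ℝ) := (ENNReal.rpow_one κ).symm
      _ < κ ^ (c0 * p') := ENNReal.rpow_lt_rpow_of_exponent_gt hκpos hκ1 hc0p'
  have hρ22 : κ < ρ2 := by
    rw [hρ2eq]
    calc κ = κ ^ (1 : ℝ) := (ENNReal.rpow_one κ).symm
      _ < κ ^ (c0 * p) := ENNReal.rpow_lt_rpow_of_exponent_gt hκpos hκ1 hc0p
  have hu0 : ∀ y : V k, u y ≠ 0 := fun y => pow_ne_zero _ hμ0
  have hut : ∀ y : V k, u y ≠ ∞ := fun y => ENNReal.pow_ne_top hμt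
  have hswap : ∀ (ν : ℝ≥0∞) (s : ℝ) (n : ℕ), (ν ^ n) ^ s = (ν ^ s) ^ n := by
    intro ν s n
    rw [← ENNReal.rpow_natCast ν n, ← ENNReal.rpow_mul, mul_comm, ENNReal.rpow_mul,
      ENNReal.rpow_natCast]
  have hup' : ∀ y : V k, u y ^ (p' : ℝ) = ρ1 ^ y.length := fun y => hswap μ p' y.length
  have hup : ∀ y : V k, u y ^ (p : ℝ) = ρ2 ^ y.length := fun y => hswap μ p y.length
  -- the constant
  set A : ℝ≥0∞ := (1 - κ * ρ1⁻¹)⁻¹ * (1 - ρ1)⁻¹ with hAdef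
  set B : ℝ≥0∞ := (1 - κ * ρ2⁻¹)⁻¹ * (1 - ρ2)⁻¹ with hBdef
  set C : ℝ≥0∞ := A ^ (p - 1) * B with hCdef
  have hfin : ∀ ρ : ℝ≥0∞, ρ < 1 → κ < ρ → (1 - κ * ρ⁻¹)⁻¹ * (1 - ρ)⁻¹ ≠ ∞ := by
    intro ρ h1 h2
    have hρ0 : ρ ≠ 0 := fun h => by simp [h] at h2
    have hρt : ρ ≠ ∞ := h1.ne_top
    have e1 : κ * ρ⁻¹ < 1 := by
      rw [← div_eq_mul_inv, ENNReal.div_lt_iff (Or.inl hρ0) (Or.inl hρt), one_mul]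
      exact h2
    apply ENNReal.mul_ne_top
    · rw [ENNReal.inv_ne_top]
      intro h
      rw [tsub_eq_zero_iff_le] at h
      exact absurd h (not_le.mpr e1)
    · rw [ENNReal.inv_ne_top]
      intro h
      rw [tsub_eq_zero_iff_le] at h
      exact absurd h (not_le.mpr h1)
  have hCt : C ≠ ∞ := by
    rw [hCdef]
    exact ENNReal.mul_ne_top
      (ENNReal.rpow_ne_top_of_nonneg (by linarith) (hfin ρ1 hρ11 hρ12))
      (hfin ρ2 hρ21 hρ22)
  refine ⟨(C ^ (1 / p)).toNNReal, ?_⟩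
  intro f
  have hcoe : ((C ^ (1 / p)).toNNReal : ℝ≥0∞) = C ^ (1 / p) :=
    ENNReal.coe_toNNReal (ENNReal.rpow_ne_top_of_nonneg (by positivity) hCt)
  rw [hcoe]
  set g : V k → ℝ≥0∞ := fun x => (∑' j : ℕ, (ENNReal.ofReal |f j x|) ^ q) ^ (1 / q) with hgdef
  set F : V k → ℝ≥0∞ := fun x => (∑' j : ℕ, (Mball (absE (f j)) x) ^ q) ^ (1 / q) with hFdef
  have hexp : ∀ a : ℝ≥0∞, a ^ (p / q) = (a ^ (1 / q)) ^ p := by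
    intro a
    rw [← ENNReal.rpow_mul, one_div, inv_mul_eq_div]
  have hFT : ∀ x : V k, F x ≤ Top g x := by
    intro x
    have h1 : F x ≤ (∑' j : ℕ, (Top (absE (f j)) x) ^ q) ^ (1 / q) := by
      apply ENNReal.rpow_le_rpow _ (by positivity)
      apply ENNReal.tsum_le_tsum
      intro j
      exact ENNReal.rpow_le_rpow (Mball_le_Top hk _ x) hq0.le
    have h2 : (∑' j : ℕ, (Top (absE (f j)) x) ^ q) ^ (1 / q) ≤ Top g x := by
      have hm := mink (fun (j : ℕ) (y : V k) => Ker x y * absE (f j) y) hq.le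
      refine le_trans hm (le_of_eq ?_)
      apply tsum_congr
      intro y
      have e1 : ∀ j : ℕ, (Ker x y * absE (f j) y) ^ q
          = Ker x y ^ q * (ENNReal.ofReal |f j y|) ^ q := by
        intro j
        rw [ENNReal.mul_rpow_of_nonneg _ _ hq0.le]
        rfl
      rw [tsum_congr e1, ENNReal.tsum_mul_left,
        ENNReal.mul_rpow_of_nonneg _ _ (by positivity : (0:ℝ) ≤ 1 / q),
        ← ENNReal.rpow_mul, mul_one_div_cancel hq0.ne', ENNReal.rpow_one]
    exact h1.trans h2
  calc (∑' x : V k, (∑' j : ℕ, (Mball (absE (f j)) x) ^ q) ^ (p / q)) ^ (1 / p)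
      = (∑' x : V k, (F x) ^ p) ^ (1 / p) := by
        congr 1
        apply tsum_congr
        intro x
        rw [hexp]
    _ ≤ (∑' x : V k, (Top g x) ^ p) ^ (1 / p) := by
        apply ENNReal.rpow_le_rpow _ (by positivity)
        exact ENNReal.tsum_le_tsum fun x => ENNReal.rpow_le_rpow (hFT x) hp0.le
    _ ≤ (C * ∑' x : V k, (g x) ^ p) ^ (1 / p) := by
        apply ENNReal.rpow_le_rpow _ (by positivity)
        exact schur hk hpq' hu0 hut hup' hup hρ11 hρ12 hρ21 hρ22 g
    _ = C ^ (1 / p) * (∑' x : V k, (g x) ^ p) ^ (1 / p) := by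
        rw [ENNReal.mul_rpow_of_nonneg _ _ (by positivity : (0:ℝ) ≤ 1 / p)]
    _ = C ^ (1 / p) * (∑' x : V k, (∑' j : ℕ, (ENNReal.ofReal |f j x|) ^ q) ^ (p / q)) ^ (1 / p) := by
        congr 2
        apply tsum_congr
        intro x
        rw [hexp]
end
end

section
/- For the infinite rooted k-ary tree T with k ≥ 2, s > 1, s' = s/(s−1), and α = 1/(s'+1), the quantities in the abstract weighted theorem satisfy E_T^w(s,r,α) ≤ c_s k^{−r/(s'+1)} and S_T(r) ≃ k^r, whence E_T^w(s,r,α)^{1/(1−α)} S_T(r)^{(1/2)·α/(1−α)} 2^{n(1/2)·α/(1−α)} ≲ c_s (2^n/k^r)^{1/(2s')}, recovering the Fefferman–Stein weak-type estimate for the k-ary tree from the abstract result. -/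
open scoped ENNReal NNReal BigOperators

noncomputable section

/-- `S_T(r) = sup_x |S(x,r)|` on the infinite rooted `k`-ary tree. -/
def STk (k : ℕ) (r : ℕ) : ℝ≥0∞ := ⨆ x : V k, sphCard x r

/-- `E_T^w(s,r,α)` on the infinite rooted `k`-ary tree. -/
def ETk (k : ℕ) (w : V k → ℝ≥0∞) (s : ℝ) (r : ℕ) (a : ℝ) : ℝ≥0∞ :=
  ⨆ (E : Finset (V k)) (F : Finset (V k)),
    (∑ x ∈ E, wsum w (↑F ∩ sph x r) / sphCard x r) /
      ((wsum w ↑F) ^ a * (∑ x ∈ E, MsSph s w x) ^ (1 - a))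

namespace TreeAux

variable {k : ℕ}

lemma lcpLen_le_left : ∀ (x y : List (Fin k)), lcpLen x y ≤ x.length
  | [], _ => by simp [lcpLen]
  | _ :: _, [] => by simp [lcpLen]
  | a :: as, b :: bs => by
    by_cases h : a = b
    · simpa [lcpLen, h] using lcpLen_le_left as bs
    · simp [lcpLen, h]

lemma lcpLen_comm : ∀ (x y : List (Fin k)), lcpLen x y = lcpLen y x
  | [], [] => rfl
  | [], _ :: _ => rfl
  | _ :: _, [] => rfl
  | a :: as, b :: bs => by
    by_cases h : a = b
    · subst h; simp [lcpLen, lcpLen_comm as bs]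
    · simp [lcpLen, h, Ne.symm h]

lemma lcpLen_le_right (x y : List (Fin k)) : lcpLen x y ≤ y.length := by
  rw [lcpLen_comm]; exact lcpLen_le_left y x

lemma take_lcpLen_eq : ∀ (x y : List (Fin k)), x.take (lcpLen x y) = y.take (lcpLen x y)
  | [], _ => by simp [lcpLen]
  | _ :: _, [] => by simp [lcpLen]
  | a :: as, b :: bs => by
    by_cases h : a = b
    · subst h; simp [lcpLen, take_lcpLen_eq as bs]
    · simp [lcpLen, h]

lemma lcpLen_append : ∀ (x l : List (Fin k)), lcpLen x (x ++ l) = x.length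
  | [], l => by cases l <;> simp [lcpLen]
  | a :: as, l => by simp [lcpLen, lcpLen_append as l]

lemma eq_take_append_drop (x y : List (Fin k)) :
    y = x.take (lcpLen x y) ++ y.drop (lcpLen x y) := by
  conv_lhs => rw [← List.take_append_drop (lcpLen x y) y]
  rw [take_lcpLen_eq]

/-- The set of lists of a fixed length. -/
lemma lists_len_finite (t : ℕ) : ({l : List (Fin k) | l.length = t}).Finite ∧
    ({l : List (Fin k) | l.length = t}).ncard = k ^ t := by
  have hset : {l : List (Fin k) | l.length = t} = Set.range (List.ofFn : (Fin t → Fin k) → _) := by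
    ext l
    constructor
    · intro hl
      exact ⟨fun i => l.get (Fin.cast hl.symm i), by
        subst hl; simpa using List.ofFn_get l⟩
    · rintro ⟨f, rfl⟩; simp [Set.mem_setOf_eq]
  rw [hset, ← Set.image_univ]
  refine ⟨(Set.finite_univ).image _, ?_⟩
  rw [Set.ncard_image_of_injective _ List.ofFn_injective, Set.ncard_univ, Nat.card_eq_fintype_card,
    Fintype.card_fun]
  simp

/-- Key counting fiber: words whose lcp with `x` has length `m` and total length `m + t`. -/
lemma fiber_card (x : V k) (m t : ℕ) :
    ({y : V k | lcpLen x y = m ∧ y.length = m + t}).Finite ∧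
    ({y : V k | lcpLen x y = m ∧ y.length = m + t}).ncard ≤ k ^ t := by
  set S := {y : V k | lcpLen x y = m ∧ y.length = m + t} with hS
  have hmap : ∀ y ∈ S, (y.drop m) ∈ {l : List (Fin k) | l.length = t} := by
    rintro y ⟨h1, h2⟩
    simp [List.length_drop, h2]
  have hinj : Set.InjOn (fun y : V k => y.drop m) S := by
    rintro y1 ⟨h1, h2⟩ y2 ⟨h3, h4⟩ he
    have e1 := eq_take_append_drop x y1
    have e2 := eq_take_append_drop x y2
    rw [h1] at e1; rw [h3] at e2
    rw [e1, e2]; simp only at he; rw [he]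
  obtain ⟨hfin, hcard⟩ := lists_len_finite (k := k) t
  constructor
  · exact Set.Finite.of_finite_image (hfin.subset (Set.image_subset_iff.2 hmap)) hinj
  · calc S.ncard ≤ _ := Set.ncard_le_ncard_of_injOn _ hmap hinj hfin
    _ = k ^ t := hcard

end TreeAux
namespace TreeAux

variable {k : ℕ}

lemma mem_sph_iff {x y : V k} {r : ℕ} : y ∈ sph x r ↔ tdist x y = r := Iff.rfl

lemma Yset_subset_fiber (x : V k) (r d : ℕ) :
    {y : V k | tdist x y = r ∧ y.length - lcpLen x y = d} ⊆
      {y : V k | lcpLen x y = x.length - (r - d) ∧ y.length = (x.length - (r - d)) + d} := by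
  rintro y ⟨h1, h2⟩
  have hl1 := lcpLen_le_left x y
  have hl2 := lcpLen_le_right x y
  rw [tdist] at h1
  constructor <;> omega

lemma Xset_subset_fiber (y : V k) (r d : ℕ) :
    {x : V k | tdist x y = r ∧ y.length - lcpLen x y = d} ⊆
      {x : V k | lcpLen y x = y.length - d ∧ x.length = (y.length - d) + (r - d)} := by
  rintro x ⟨h1, h2⟩
  have hl1 := lcpLen_le_left x y
  have hl2 := lcpLen_le_right x y
  rw [tdist] at h1
  refine ⟨?_, ?_⟩ <;> [rw [← lcpLen_comm]; skip] <;> omega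

lemma nat_geom {k : ℕ} (hk : 2 ≤ k) : ∀ m : ℕ, ∑ d ∈ Finset.range (m + 1), k ^ d ≤ 2 * k ^ m := by
  intro m
  induction m with
  | zero => simp
  | succ m ih =>
    rw [Finset.sum_range_succ]
    have h1 : 2 * k ^ m ≤ k ^ (m + 1) := by
      rw [pow_succ, mul_comm (k ^ m) k]
      exact Nat.mul_le_mul_right _ hk
    calc ∑ d ∈ Finset.range (m + 1), k ^ d + k ^ (m + 1) ≤ 2 * k ^ m + k ^ (m + 1) :=
          Nat.add_le_add_right ih _
      _ ≤ k ^ (m + 1) + k ^ (m + 1) := Nat.add_le_add_right h1 _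
      _ = 2 * k ^ (m + 1) := by ring

lemma sph_finite_card (hk : 2 ≤ k) (x : V k) (r : ℕ) :
    (sph x r).Finite ∧ (sph x r).ncard ≤ 2 * k ^ r := by
  classical
  set B : Finset (V k) := (Finset.range (r + 1)).biUnion
    (fun d => (fiber_card x (x.length - (r - d)) d).1.toFinset) with hB
  have hsub : sph x r ⊆ ↑B := by
    intro y hy
    have h1 : tdist x y = r := hy
    have hl2 := lcpLen_le_right x y
    have hd : y.length - lcpLen x y ≤ r := by rw [tdist] at h1; omega
    have hy' : y ∈ {y : V k | tdist x y = r ∧ y.length - lcpLen x y = y.length - lcpLen x y} :=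
      ⟨h1, rfl⟩
    have := Yset_subset_fiber x r (y.length - lcpLen x y) hy'
    simp only [hB, Finset.coe_biUnion, Finset.mem_coe, Finset.mem_range, Set.mem_iUnion]
    exact ⟨y.length - lcpLen x y, by omega, (Set.Finite.mem_toFinset _).2 this⟩
  refine ⟨Set.Finite.subset B.finite_toSet hsub, ?_⟩
  calc (sph x r).ncard ≤ (↑B : Set (V k)).ncard := Set.ncard_le_ncard hsub B.finite_toSet
    _ = B.card := Set.ncard_coe_finset B
    _ ≤ ∑ d ∈ Finset.range (r + 1), ((fiber_card x (x.length - (r - d)) d).1.toFinset).card :=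
        Finset.card_biUnion_le
    _ ≤ ∑ d ∈ Finset.range (r + 1), k ^ d := by
        refine Finset.sum_le_sum fun d _ => ?_
        rw [← Set.ncard_eq_toFinset_card _ (fiber_card x (x.length - (r - d)) d).1]
        exact (fiber_card x (x.length - (r - d)) d).2
    _ ≤ 2 * k ^ r := nat_geom hk r

lemma sph_card_lower (x : V k) (r : ℕ) (hfin : (sph x r).Finite) :
    k ^ r ≤ (sph x r).ncard := by
  have himg : (fun l : List (Fin k) => x ++ l) '' {l : List (Fin k) | l.length = r} ⊆ sph x r := by
    rintro - ⟨l, hl, rfl⟩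
    have h1 : lcpLen x (x ++ l) = x.length := lcpLen_append x l
    show tdist x (x ++ l) = r
    rw [tdist, h1, List.length_append]
    simp only [Set.mem_setOf_eq] at hl
    omega
  have hinj : Function.Injective (fun l : List (Fin k) => x ++ l) :=
    fun a b h => List.append_cancel_left h
  calc (k : ℕ) ^ r = ({l : List (Fin k) | l.length = r}).ncard := (lists_len_finite r).2.symm
    _ = ((fun l : List (Fin k) => x ++ l) '' {l : List (Fin k) | l.length = r}).ncard :=
        (Set.ncard_image_of_injective _ hinj).symm
    _ ≤ (sph x r).ncard := Set.ncard_le_ncard himg hfin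

end TreeAux
namespace TreeAux

lemma en_geom {κ : ℝ≥0∞} (hκ : 2 ≤ κ) (m : ℕ) :
    ∑ e ∈ Finset.range (m + 1), κ ^ e ≤ 2 * κ ^ m := by
  induction m with
  | zero => simp
  | succ m ih =>
    rw [Finset.sum_range_succ]
    have h1 : 2 * κ ^ m ≤ κ ^ (m + 1) := by
      rw [pow_succ, mul_comm (κ ^ m) κ]
      exact mul_le_mul_left hκ _
    calc ∑ d ∈ Finset.range (m + 1), κ ^ d + κ ^ (m + 1) ≤ 2 * κ ^ m + κ ^ (m + 1) :=
          add_le_add_left ih _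
      _ ≤ κ ^ (m + 1) + κ ^ (m + 1) := add_le_add_left h1 _
      _ = 2 * κ ^ (m + 1) := (two_mul _).symm

lemma sum_min_le (s' : ℝ) (hs' : 1 < s') (κ K W B : ℝ≥0∞)
    (hκ2 : 2 ≤ κ) (hκt : κ ≠ ⊤) (hK1 : 1 ≤ K) (hKt : K ≠ ⊤) (r : ℕ) :
    ∑ d ∈ Finset.range (r + 1), min (κ ^ (r - d) * W) (K * κ ^ ((d : ℝ) / s') * B) ≤
      (2 + (1 - (2 : ℝ≥0∞) ^ (-(1 / s')))⁻¹) *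
        (κ ^ ((r : ℝ) * (1 / (s' + 1))) * K ^ (s' / (s' + 1)) *
          (W ^ (1 / (s' + 1)) * B ^ (s' / (s' + 1)))) := by
  classical
  have hs0 : (0 : ℝ) < s' := by linarith
  set α : ℝ := 1 / (s' + 1) with hα
  set β : ℝ := s' / (s' + 1) with hβ
  have hα0 : 0 < α := by positivity
  have hβ0 : 0 < β := by positivity
  have hαβ : α + β = 1 := by rw [hα, hβ]; field_simp; ring
  have hβs : β / s' = α := by rw [hα, hβ]; field_simp
  have hκ0 : κ ≠ 0 := by intro h; rw [h] at hκ2; simp at hκ2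
  have hK0 : K ≠ 0 := by intro h; rw [h] at hK1; simp at hK1
  set ρ : ℝ≥0∞ := (2 : ℝ≥0∞) ^ (-(1 / s')) with hρ
  set Cg : ℝ≥0∞ := (1 - ρ)⁻¹ with hCg
  set Val : ℝ≥0∞ := κ ^ ((r : ℝ) * α) * K ^ β * (W ^ α * B ^ β) with hVal
  -- trivial cases
  by_cases hW0 : W = 0
  · have : ∀ d ∈ Finset.range (r + 1), min (κ ^ (r - d) * W) (K * κ ^ ((d : ℝ) / s') * B) = 0 := by
      intro d _; simp [hW0]
    rw [Finset.sum_eq_zero this]; exact zero_le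
  by_cases hB0 : B = 0
  · have : ∀ d ∈ Finset.range (r + 1), min (κ ^ (r - d) * W) (K * κ ^ ((d : ℝ) / s') * B) = 0 := by
      intro d _; simp [hB0]
    rw [Finset.sum_eq_zero this]; exact zero_le
  have hValtop : (W = ⊤ ∨ B = ⊤) → (2 + Cg) * Val = ⊤ := by
    intro h
    have h1 : W ^ α * B ^ β = ⊤ := by
      rcases h with h | h
      · rw [h, ENNReal.top_rpow_of_pos hα0]
        refine ENNReal.top_mul ?_
        intro hcon
        rcases ENNReal.rpow_eq_zero_iff.1 hcon with ⟨h', _⟩ | ⟨_, h'⟩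
        · exact hB0 h'
        · linarith
      · rw [h, ENNReal.top_rpow_of_pos hβ0]
        refine ENNReal.mul_top ?_
        intro hcon
        rcases ENNReal.rpow_eq_zero_iff.1 hcon with ⟨h', _⟩ | ⟨_, h'⟩
        · exact hW0 h'
        · linarith
    have h2 : Val = ⊤ := by
      rw [hVal]
      refine ENNReal.mul_eq_top.2 (Or.inl ⟨mul_ne_zero ?_ ?_, h1⟩)
      · exact (ENNReal.rpow_pos (by simp [pos_iff_ne_zero, hκ0]) hκt).ne'
      · exact (ENNReal.rpow_pos (by simp [pos_iff_ne_zero, hK0]) hKt).ne'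
    exact ENNReal.mul_eq_top.2 (Or.inl ⟨by simp, h2⟩)
  by_cases hWt : W = ⊤
  · rw [hValtop (Or.inl hWt)]; exact le_top
  by_cases hBt : B = ⊤
  · rw [hValtop (Or.inr hBt)]; exact le_top
  -- main case
  set a : ℕ → ℝ≥0∞ := fun d => κ ^ (r - d) * W with ha
  set c : ℕ → ℝ≥0∞ := fun d => K * κ ^ ((d : ℝ) / s') * B with hc
  have ha0 : ∀ d, a d ≠ 0 := fun d => mul_ne_zero (pow_ne_zero _ hκ0) hW0
  have hat : ∀ d, a d ≠ ⊤ := fun d => ENNReal.mul_ne_top (ENNReal.pow_ne_top hκt) hWt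
  have hc0 : ∀ d, c d ≠ 0 := fun d =>
    mul_ne_zero (mul_ne_zero hK0 (ENNReal.rpow_pos (by simp [pos_iff_ne_zero, hκ0]) hκt).ne') hB0
  have hct : ∀ d, c d ≠ ⊤ := fun d =>
    ENNReal.mul_ne_top (ENNReal.mul_ne_top hKt (ENNReal.rpow_ne_top_of_nonneg (by positivity) hκt)) hBt
  -- the balanced value
  have hbal : ∀ d : ℕ, d ≤ r → (a d) ^ α * (c d) ^ β = Val := by
    intro d hd
    rw [ha, hc]
    simp only
    rw [ENNReal.mul_rpow_of_nonneg _ _ hα0.le, ENNReal.mul_rpow_of_nonneg _ _ hβ0.le,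
      ENNReal.mul_rpow_of_nonneg K _ hβ0.le]
    rw [← ENNReal.rpow_natCast κ (r - d), ← ENNReal.rpow_mul, ← ENNReal.rpow_mul]
    have hcast : ((r - d : ℕ) : ℝ) = (r : ℝ) - (d : ℝ) := by
      rw [Nat.cast_sub hd]
    have hexp : ((r - d : ℕ) : ℝ) * α + (d : ℝ) / s' * β = (r : ℝ) * α := by
      rw [hcast]
      have : (d : ℝ) / s' * β = (d : ℝ) * (β / s') := by ring
      rw [this, hβs]; ring
    calc κ ^ (((r - d : ℕ) : ℝ) * α) * W ^ α * (K ^ β * κ ^ ((d : ℝ) / s' * β) * B ^ β)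
        = κ ^ (((r - d : ℕ) : ℝ) * α) * κ ^ ((d : ℝ) / s' * β) * K ^ β * (W ^ α * B ^ β) := by ring
      _ = κ ^ ((r : ℝ) * α) * K ^ β * (W ^ α * B ^ β) := by
          rw [← ENNReal.rpow_add _ _ hκ0 hκt, hexp]
  have hab : ∀ d, d ≤ r → a d ≤ c d → a d ≤ Val := by
    intro d hd h
    calc a d = a d ^ (α + β) := by rw [hαβ, ENNReal.rpow_one]
      _ = a d ^ α * a d ^ β := ENNReal.rpow_add _ _ (ha0 d) (hat d)
      _ ≤ a d ^ α * c d ^ β := mul_le_mul_right (ENNReal.rpow_le_rpow h hβ0.le) _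
      _ = Val := hbal d hd
  have hcb : ∀ d, d ≤ r → c d ≤ a d → c d ≤ Val := by
    intro d hd h
    calc c d = c d ^ (α + β) := by rw [hαβ, ENNReal.rpow_one]
      _ = c d ^ α * c d ^ β := ENNReal.rpow_add _ _ (hc0 d) (hct d)
      _ ≤ a d ^ α * c d ^ β := mul_le_mul_left (ENNReal.rpow_le_rpow h hα0.le) _
      _ = Val := hbal d hd
  -- split
  set S1 : Finset ℕ := (Finset.range (r + 1)).filter (fun d => a d ≤ c d) with hS1
  set S2 : Finset ℕ := (Finset.range (r + 1)).filter (fun d => ¬ a d ≤ c d) with hS2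
  have hsplit : ∑ d ∈ Finset.range (r + 1), min (a d) (c d) ≤ ∑ d ∈ S1, a d + ∑ d ∈ S2, c d := by
    rw [← Finset.sum_filter_add_sum_filter_not (Finset.range (r + 1)) (fun d => a d ≤ c d)]
    refine add_le_add (Finset.sum_le_sum ?_) (Finset.sum_le_sum ?_)
    · intro d hd; exact min_le_left _ _
    · intro d hd; exact min_le_right _ _
  -- piece 1
  have hpiece1 : ∑ d ∈ S1, a d ≤ 2 * Val := by
    rcases Finset.eq_empty_or_nonempty S1 with h | h
    · rw [h]; simp
    obtain ⟨d1, hd1S, hd1le⟩ : ∃ d1 ∈ S1, ∀ d ∈ S1, d1 ≤ d :=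
      ⟨S1.min' h, S1.min'_mem h, fun d hd => S1.min'_le d hd⟩
    have hd1mem : a d1 ≤ c d1 ∧ d1 < r + 1 := by
      rw [hS1, Finset.mem_filter, Finset.mem_range] at hd1S
      exact ⟨hd1S.2, hd1S.1⟩
    have hd1r : d1 ≤ r := by omega
    have hsub : S1 ⊆ Finset.Icc d1 r := by
      intro d hd
      have h1 := hd1le d hd
      rw [hS1, Finset.mem_filter, Finset.mem_range] at hd
      rw [Finset.mem_Icc]; omega
    calc ∑ d ∈ S1, a d ≤ ∑ d ∈ Finset.Icc d1 r, a d :=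
          Finset.sum_le_sum_of_subset hsub
      _ = ∑ d ∈ Finset.Icc d1 r, κ ^ (r - d) * W := by simp only [ha]
      _ = (∑ d ∈ Finset.Icc d1 r, κ ^ (r - d)) * W := (Finset.sum_mul _ _ _).symm
      _ = (∑ e ∈ Finset.range (r - d1 + 1), κ ^ e) * W := by
          congr 1
          refine Finset.sum_nbij' (fun d => r - d) (fun e => r - e) ?_ ?_ ?_ ?_ ?_
          · intro d hd; rw [Finset.mem_Icc] at hd; rw [Finset.mem_range]; omega
          · intro e he; rw [Finset.mem_range] at he; rw [Finset.mem_Icc]; omega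
          · intro d hd; rw [Finset.mem_Icc] at hd; omega
          · intro e he; rw [Finset.mem_range] at he; omega
          · intro d _; rfl
      _ ≤ (2 * κ ^ (r - d1)) * W := mul_le_mul_left (en_geom hκ2 _) W
      _ = 2 * a d1 := by simp only [ha]; ring
      _ ≤ 2 * Val := mul_le_mul_right (hab d1 hd1r hd1mem.1) 2
  -- piece 2
  have hρlt : ρ < 1 := by
    rw [hρ]
    calc (2 : ℝ≥0∞) ^ (-(1 / s')) < (2 : ℝ≥0∞) ^ (0 : ℝ) := by
          refine ENNReal.rpow_lt_rpow_of_exponent_lt (by norm_num) (by norm_num) ?_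
          have : (0 : ℝ) < 1 / s' := by positivity
          linarith
      _ = 1 := ENNReal.rpow_zero
  have hpiece2 : ∑ d ∈ S2, c d ≤ Cg * Val := by
    rcases Finset.eq_empty_or_nonempty S2 with h | h
    · rw [h]; simp
    obtain ⟨d2, hd2S, hd2le⟩ : ∃ d2 ∈ S2, ∀ d ∈ S2, d ≤ d2 :=
      ⟨S2.max' h, S2.max'_mem h, fun d hd => S2.le_max' d hd⟩
    have hd2mem : ¬ a d2 ≤ c d2 ∧ d2 < r + 1 := by
      rw [hS2, Finset.mem_filter, Finset.mem_range] at hd2S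
      exact ⟨hd2S.2, hd2S.1⟩
    have hd2r : d2 ≤ r := by omega
    have hsub : S2 ⊆ Finset.range (d2 + 1) := by
      intro d hd
      have h1 := hd2le d hd
      rw [Finset.mem_range]; omega
    have hterm : ∀ d, d ≤ d2 → c d ≤ c d2 * ρ ^ (d2 - d) := by
      intro d hd
      have key : (1 : ℝ≥0∞) ≤ κ ^ (((d2 - d : ℕ) : ℝ) / s') * ρ ^ (d2 - d) := by
        have hρpow : ρ ^ (d2 - d) = (2 : ℝ≥0∞) ^ (-(((d2 - d : ℕ) : ℝ) / s')) := by
          rw [hρ, ← ENNReal.rpow_natCast ((2 : ℝ≥0∞) ^ (-(1 / s'))) (d2 - d),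
            ← ENNReal.rpow_mul]
          congr 1; ring
        rw [hρpow]
        have h2 : (2 : ℝ≥0∞) ^ (((d2 - d : ℕ) : ℝ) / s') ≤ κ ^ (((d2 - d : ℕ) : ℝ) / s') :=
          ENNReal.rpow_le_rpow hκ2 (by positivity)
        calc (1 : ℝ≥0∞) = (2 : ℝ≥0∞) ^ (((d2 - d : ℕ) : ℝ) / s' + (-(((d2 - d : ℕ) : ℝ) / s'))) := by
              rw [add_neg_cancel, ENNReal.rpow_zero]
          _ = (2 : ℝ≥0∞) ^ (((d2 - d : ℕ) : ℝ) / s') * (2 : ℝ≥0∞) ^ (-(((d2 - d : ℕ) : ℝ) / s')) :=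
              ENNReal.rpow_add _ _ (by norm_num) (by norm_num)
          _ ≤ κ ^ (((d2 - d : ℕ) : ℝ) / s') * (2 : ℝ≥0∞) ^ (-(((d2 - d : ℕ) : ℝ) / s')) :=
              mul_le_mul_left h2 _
      have hexp : κ ^ ((d : ℝ) / s') * κ ^ (((d2 - d : ℕ) : ℝ) / s') = κ ^ ((d2 : ℝ) / s') := by
        rw [← ENNReal.rpow_add _ _ hκ0 hκt]
        congr 1
        rw [Nat.cast_sub hd]; ring
      calc c d = K * κ ^ ((d : ℝ) / s') * B * 1 := by rw [mul_one]
        _ ≤ K * κ ^ ((d : ℝ) / s') * B * (κ ^ (((d2 - d : ℕ) : ℝ) / s') * ρ ^ (d2 - d)) :=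
            mul_le_mul_right key _
        _ = (K * (κ ^ ((d : ℝ) / s') * κ ^ (((d2 - d : ℕ) : ℝ) / s')) * B) * ρ ^ (d2 - d) := by ring
        _ = c d2 * ρ ^ (d2 - d) := by simp only [hc]; rw [← hexp]
    calc ∑ d ∈ S2, c d ≤ ∑ d ∈ Finset.range (d2 + 1), c d := Finset.sum_le_sum_of_subset hsub
      _ ≤ ∑ d ∈ Finset.range (d2 + 1), c d2 * ρ ^ (d2 - d) := by
          refine Finset.sum_le_sum ?_
          intro d hd; rw [Finset.mem_range] at hd
          exact hterm d (by omega)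
      _ = c d2 * ∑ d ∈ Finset.range (d2 + 1), ρ ^ (d2 - d) := by rw [Finset.mul_sum]
      _ = c d2 * ∑ j ∈ Finset.range (d2 + 1), ρ ^ j := by
          congr 1
          have := Finset.sum_range_reflect (fun j => ρ ^ j) (d2 + 1)
          simpa using this
      _ ≤ c d2 * Cg := by
          refine mul_le_mul_right ?_ _
          rw [hCg, ← ENNReal.tsum_geometric ρ]
          exact ENNReal.sum_le_tsum _
      _ = Cg * c d2 := mul_comm _ _
      _ ≤ Cg * Val := mul_le_mul_right (hcb d2 hd2r (le_of_not_ge hd2mem.1)) Cg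
  calc ∑ d ∈ Finset.range (r + 1), min (a d) (c d) ≤ ∑ d ∈ S1, a d + ∑ d ∈ S2, c d := hsplit
    _ ≤ 2 * Val + Cg * Val := add_le_add hpiece1 hpiece2
    _ = (2 + Cg) * Val := (add_mul _ _ _).symm

end TreeAux
namespace TreeAux

variable {k : ℕ}

lemma wsum_finset (w : V k → ℝ≥0∞) (G : Finset (V k)) : wsum w ↑G = ∑ y ∈ G, w y := by
  rw [wsum]
  exact Finset.tsum_subtype G w

lemma wsum_inter_filter (w : V k → ℝ≥0∞) (F : Finset (V k)) (x : V k) (r : ℕ) :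
    wsum w (↑F ∩ sph x r) = ∑ y ∈ F.filter (fun y => tdist x y = r), w y := by
  have h : (↑F ∩ sph x r : Set (V k)) = ↑(F.filter (fun y => tdist x y = r)) := by
    ext y
    simp [sph, Set.mem_setOf_eq, Finset.mem_coe, Finset.mem_filter, Set.mem_inter_iff]
  rw [h, wsum_finset]

lemma hκ2 (hk : 2 ≤ k) : (2 : ℝ≥0∞) ≤ (k : ℝ≥0∞) := by exact_mod_cast hk
lemma hκt : (k : ℝ≥0∞) ≠ ⊤ := ENNReal.natCast_ne_top k

lemma sphCard_lb (hk : 2 ≤ k) (x : V k) (r : ℕ) : (k : ℝ≥0∞) ^ r ≤ sphCard x r := by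
  rw [sphCard]
  have h := sph_card_lower x r (sph_finite_card hk x r).1
  calc (k : ℝ≥0∞) ^ r = ((k ^ r : ℕ) : ℝ≥0∞) := by push_cast; ring
    _ ≤ _ := by exact_mod_cast h

lemma sphCard_ub (hk : 2 ≤ k) (x : V k) (r : ℕ) : sphCard x r ≤ 2 * (k : ℝ≥0∞) ^ r := by
  rw [sphCard]
  have h := (sph_finite_card hk x r).2
  calc ((sph x r).ncard : ℝ≥0∞) ≤ ((2 * k ^ r : ℕ) : ℝ≥0∞) := by exact_mod_cast h
    _ = 2 * (k : ℝ≥0∞) ^ r := by push_cast; ring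

lemma sphCard_ne_zero (hk : 2 ≤ k) (x : V k) (r : ℕ) : sphCard x r ≠ 0 := by
  have h := sphCard_lb hk x r
  have h2 : (k : ℝ≥0∞) ≠ 0 := by
    have := hκ2 hk
    intro hc; rw [hc] at this; simp at this
  intro h0
  rw [h0, le_zero_iff] at h
  exact pow_ne_zero r h2 h

lemma sphCard_ne_top (hk : 2 ≤ k) (x : V k) (r : ℕ) : sphCard x r ≠ ⊤ := by
  refine ne_top_of_le_ne_top ?_ (sphCard_ub hk x r)
  exact ENNReal.mul_ne_top (by norm_num) (ENNReal.pow_ne_top (hκt (k := k)))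

lemma wsum_sph_le (hk : 2 ≤ k) (f : V k → ℝ≥0∞) (x : V k) (r : ℕ) :
    wsum f (sph x r) ≤ sphCard x r * Msph f x := by
  have h : wsum f (sph x r) = sphAvg f x r * sphCard x r := by
    rw [sphAvg, ENNReal.div_mul_cancel (sphCard_ne_zero hk x r) (sphCard_ne_top hk x r)]
  rw [h, mul_comm]
  exact mul_le_mul_right (le_iSup (fun r => sphAvg f x r) r) _

/-- per-`y` counting bound. -/
lemma countE_le (hk : 2 ≤ k) (E : Finset (V k)) (y : V k) (r d : ℕ) :
    (E.filter (fun x => tdist x y = r ∧ y.length - lcpLen x y = d)).card ≤ k ^ (r - d) := by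
  classical
  obtain ⟨hfin, hcard⟩ := fiber_card y (y.length - d) (r - d)
  calc (E.filter (fun x => tdist x y = r ∧ y.length - lcpLen x y = d)).card
      = (↑(E.filter (fun x => tdist x y = r ∧ y.length - lcpLen x y = d)) : Set (V k)).ncard :=
        (Set.ncard_coe_finset _).symm
    _ ≤ _ := Set.ncard_le_ncard (fun x hx => by
        rw [Finset.mem_coe, Finset.mem_filter] at hx
        exact Xset_subset_fiber y r d hx.2) hfin
    _ ≤ k ^ (r - d) := hcard

/-- per-`x` counting bound. -/
lemma countF_le (hk : 2 ≤ k) (F : Finset (V k)) (x : V k) (r d : ℕ) :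
    (F.filter (fun y => tdist x y = r ∧ y.length - lcpLen x y = d)).card ≤ k ^ d := by
  classical
  obtain ⟨hfin, hcard⟩ := fiber_card x (x.length - (r - d)) d
  calc (F.filter (fun y => tdist x y = r ∧ y.length - lcpLen x y = d)).card
      = (↑(F.filter (fun y => tdist x y = r ∧ y.length - lcpLen x y = d)) : Set (V k)).ncard :=
        (Set.ncard_coe_finset _).symm
    _ ≤ _ := Set.ncard_le_ncard (fun y hy => by
        rw [Finset.mem_coe, Finset.mem_filter] at hy
        exact Yset_subset_fiber x r d hy.2) hfin
    _ ≤ k ^ d := hcard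

end TreeAux
namespace TreeAux

lemma ETk_le {k : ℕ} (hk : 2 ≤ k) {s : ℝ} (hs : 1 < s) (w : V k → ℝ≥0∞) (r : ℕ) :
    ETk k w s r (1 / (s / (s - 1) + 1)) ≤
      ((2 + (1 - (2 : ℝ≥0∞) ^ (-(1 / (s / (s - 1)))))⁻¹) * 2) *
        (k : ℝ≥0∞) ^ (-(r : ℝ) / (s / (s - 1) + 1)) := by
  classical
  have hs1 : (0 : ℝ) < s - 1 := by linarith
  set s' : ℝ := s / (s - 1) with hs'def
  have hs'1 : 1 < s' := by
    rw [hs'def, lt_div_iff₀ hs1]; linarith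
  have hs'0 : (0 : ℝ) < s' := by linarith
  set α : ℝ := 1 / (s' + 1) with hα
  set β : ℝ := s' / (s' + 1) with hβ
  have hα0 : 0 < α := by positivity
  have hβ0 : 0 < β := by positivity
  have h1mα : (1 : ℝ) - α = β := by rw [hα, hβ]; field_simp; ring
  have hβ1 : β ≤ 1 := by rw [hβ]; rw [div_le_one (by positivity)]; linarith
  have hβss : β / s ≤ 1 := by
    rw [div_le_one (by positivity)]; linarith
  have hinvs : (1 : ℝ) - s⁻¹ = 1 / s' := by
    rw [hs'def]; field_simp
  set κ : ℝ≥0∞ := (k : ℝ≥0∞) with hκdef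
  have hκ2' : (2 : ℝ≥0∞) ≤ κ := hκ2 hk
  have hκt' : κ ≠ ⊤ := hκt
  have hκ0 : κ ≠ 0 := by intro h; rw [h] at hκ2'; simp at hκ2'
  set Ctot : ℝ≥0∞ := 2 + (1 - (2 : ℝ≥0∞) ^ (-(1 / s')))⁻¹ with hCtot
  rw [ETk]
  refine iSup_le fun E => iSup_le fun F => ?_
  set W : ℝ≥0∞ := wsum w ↑F with hW
  set B : ℝ≥0∞ := ∑ x ∈ E, MsSph s w x with hB
  set K : ℝ≥0∞ := (2 * κ ^ r) ^ (1 / s) with hK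
  have hone_le_pow : (1 : ℝ≥0∞) ≤ κ ^ r := one_le_pow_of_one_le' (le_trans (by norm_num) hκ2') r
  have hK1 : (1 : ℝ≥0∞) ≤ K := by
    rw [hK]
    calc (1 : ℝ≥0∞) = 1 ^ (1 / s) := (ENNReal.one_rpow _).symm
      _ ≤ (2 * κ ^ r) ^ (1 / s) := by
          refine ENNReal.rpow_le_rpow ?_ (by positivity)
          calc (1 : ℝ≥0∞) ≤ 2 := by norm_num
            _ = 2 * 1 := (mul_one 2).symm
            _ ≤ 2 * κ ^ r := mul_le_mul_right hone_le_pow 2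
  have hKt : K ≠ ⊤ := by
    rw [hK]
    exact ENNReal.rpow_ne_top_of_nonneg (by positivity)
      (ENNReal.mul_ne_top (by norm_num) (ENNReal.pow_ne_top hκt'))
  refine ENNReal.div_le_of_le_mul ?_
  -- Step 1: replace sphCard by κ^r
  have step1 : ∑ x ∈ E, wsum w (↑F ∩ sph x r) / sphCard x r ≤
      (∑ x ∈ E, wsum w (↑F ∩ sph x r)) / κ ^ r := by
    rw [div_eq_mul_inv, Finset.sum_mul]
    refine Finset.sum_le_sum fun x _ => ?_
    rw [← div_eq_mul_inv]
    exact ENNReal.div_le_div_left (sphCard_lb hk x r) _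
  -- Step 2: fiberwise decomposition of the pair sum
  have hdecomp : ∀ x : V k, ∑ y ∈ F.filter (fun y => tdist x y = r), w y =
      ∑ d ∈ Finset.range (r + 1),
        ∑ y ∈ F.filter (fun y => tdist x y = r ∧ y.length - lcpLen x y = d), w y := by
    intro x
    have hmaps : ∀ y ∈ F.filter (fun y => tdist x y = r),
        y.length - lcpLen x y ∈ Finset.range (r + 1) := by
      intro y hy
      rw [Finset.mem_filter] at hy
      have h1 := hy.2
      have h2 := lcpLen_le_right x y
      rw [tdist] at h1
      rw [Finset.mem_range]; omega
    calc ∑ y ∈ F.filter (fun y => tdist x y = r), w y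
        = ∑ d ∈ Finset.range (r + 1),
            ∑ y ∈ (F.filter (fun y => tdist x y = r)).filter
              (fun y => y.length - lcpLen x y = d), w y :=
          (Finset.sum_fiberwise_of_maps_to hmaps w).symm
      _ = ∑ d ∈ Finset.range (r + 1),
            ∑ y ∈ F.filter (fun y => tdist x y = r ∧ y.length - lcpLen x y = d), w y := by
          refine Finset.sum_congr rfl fun d _ => ?_
          rw [Finset.filter_filter]
  have step2 : ∑ x ∈ E, wsum w (↑F ∩ sph x r) =
      ∑ d ∈ Finset.range (r + 1), ∑ x ∈ E,
        ∑ y ∈ F.filter (fun y => tdist x y = r ∧ y.length - lcpLen x y = d), w y := by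
    calc ∑ x ∈ E, wsum w (↑F ∩ sph x r)
        = ∑ x ∈ E, ∑ d ∈ Finset.range (r + 1),
            ∑ y ∈ F.filter (fun y => tdist x y = r ∧ y.length - lcpLen x y = d), w y := by
          refine Finset.sum_congr rfl fun x _ => ?_
          rw [wsum_inter_filter, hdecomp x]
      _ = _ := Finset.sum_comm
  -- Bound A (per-y counting)
  have boundA : ∀ d ∈ Finset.range (r + 1), (∑ x ∈ E,
      ∑ y ∈ F.filter (fun y => tdist x y = r ∧ y.length - lcpLen x y = d), w y) ≤
      κ ^ (r - d) * W := by
    intro d _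
    calc ∑ x ∈ E, ∑ y ∈ F.filter (fun y => tdist x y = r ∧ y.length - lcpLen x y = d), w y
        = ∑ x ∈ E, ∑ y ∈ F,
            if tdist x y = r ∧ y.length - lcpLen x y = d then w y else 0 := by
          refine Finset.sum_congr rfl fun x _ => ?_
          rw [Finset.sum_filter]
      _ = ∑ y ∈ F, ∑ x ∈ E,
            if tdist x y = r ∧ y.length - lcpLen x y = d then w y else 0 := Finset.sum_comm
      _ = ∑ y ∈ F, ∑ x ∈ E.filter (fun x => tdist x y = r ∧ y.length - lcpLen x y = d), w y := by
          refine Finset.sum_congr rfl fun y _ => ?_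
          rw [Finset.sum_filter]
      _ ≤ ∑ y ∈ F, κ ^ (r - d) * w y := by
          refine Finset.sum_le_sum fun y _ => ?_
          rw [Finset.sum_const, nsmul_eq_mul]
          refine mul_le_mul_left ?_ _
          calc ((E.filter (fun x => tdist x y = r ∧ y.length - lcpLen x y = d)).card : ℝ≥0∞)
              ≤ ((k ^ (r - d) : ℕ) : ℝ≥0∞) := by exact_mod_cast countE_le hk E y r d
            _ = κ ^ (r - d) := by rw [hκdef]; push_cast; ring
      _ = κ ^ (r - d) * W := by rw [← Finset.mul_sum, hW, wsum_finset]
  -- Bound B (per-x Hölder)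
  have boundB : ∀ d ∈ Finset.range (r + 1), (∑ x ∈ E,
      ∑ y ∈ F.filter (fun y => tdist x y = r ∧ y.length - lcpLen x y = d), w y) ≤
      K * κ ^ ((d : ℝ) / s') * B := by
    intro d _
    have hper : ∀ x ∈ E,
        ∑ y ∈ F.filter (fun y => tdist x y = r ∧ y.length - lcpLen x y = d), w y ≤
        K * κ ^ ((d : ℝ) / s') * MsSph s w x := by
      intro x _
      set G := F.filter (fun y => tdist x y = r ∧ y.length - lcpLen x y = d) with hG
      have hold : ∑ y ∈ G, w y ≤
          ((G.card : ℝ≥0∞)) ^ (1 - s⁻¹) * (∑ y ∈ G, w y ^ s) ^ s⁻¹ := by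
        have h := ENNReal.inner_le_weight_mul_Lp_of_nonneg G hs.le (fun _ => 1) w
        simpa using h
      have hcard : ((G.card : ℝ≥0∞)) ^ (1 - s⁻¹) ≤ κ ^ ((d : ℝ) / s') := by
        have h1 : ((G.card : ℝ≥0∞)) ≤ κ ^ ((d : ℕ) : ℝ) := by
          rw [ENNReal.rpow_natCast]
          calc ((G.card : ℝ≥0∞)) ≤ ((k ^ d : ℕ) : ℝ≥0∞) := by
                exact_mod_cast countF_le hk F x r d
            _ = κ ^ d := by rw [hκdef]; push_cast; ring
        calc ((G.card : ℝ≥0∞)) ^ (1 - s⁻¹) ≤ (κ ^ ((d : ℕ) : ℝ)) ^ (1 - s⁻¹) :=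
              ENNReal.rpow_le_rpow h1 (by rw [hinvs]; positivity)
          _ = κ ^ ((d : ℝ) * (1 - s⁻¹)) := (ENNReal.rpow_mul _ _ _).symm
          _ = κ ^ ((d : ℝ) / s') := by
              congr 1
              rw [hinvs]; ring
      have hsum : (∑ y ∈ G, w y ^ s) ^ s⁻¹ ≤ K * MsSph s w x := by
        have hGsub : G ⊆ (sph_finite_card hk x r).1.toFinset := by
          intro y hy
          rw [hG, Finset.mem_filter] at hy
          rw [Set.Finite.mem_toFinset]
          exact hy.2.1
        have h1 : ∑ y ∈ G, w y ^ s ≤ 2 * κ ^ r * Msph (fun y => w y ^ s) x := by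
          calc ∑ y ∈ G, w y ^ s ≤ ∑ y ∈ (sph_finite_card hk x r).1.toFinset, w y ^ s :=
                Finset.sum_le_sum_of_subset hGsub
            _ = wsum (fun y => w y ^ s) (sph x r) := by
                rw [← wsum_finset]
                congr 1
                exact Set.Finite.coe_toFinset _
            _ ≤ sphCard x r * Msph (fun y => w y ^ s) x := wsum_sph_le hk _ x r
            _ ≤ 2 * κ ^ r * Msph (fun y => w y ^ s) x :=
                mul_le_mul_left (sphCard_ub hk x r) _
        calc (∑ y ∈ G, w y ^ s) ^ s⁻¹ ≤ (2 * κ ^ r * Msph (fun y => w y ^ s) x) ^ s⁻¹ :=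
              ENNReal.rpow_le_rpow h1 (by positivity)
          _ = (2 * κ ^ r) ^ s⁻¹ * (Msph (fun y => w y ^ s) x) ^ s⁻¹ :=
              ENNReal.mul_rpow_of_nonneg _ _ (by positivity)
          _ = K * MsSph s w x := by
              rw [hK, MsSph, one_div]
      calc ∑ y ∈ G, w y ≤ ((G.card : ℝ≥0∞)) ^ (1 - s⁻¹) * (∑ y ∈ G, w y ^ s) ^ s⁻¹ := hold
        _ ≤ κ ^ ((d : ℝ) / s') * (K * MsSph s w x) := mul_le_mul' hcard hsum
        _ = K * κ ^ ((d : ℝ) / s') * MsSph s w x := by ring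
    calc (∑ x ∈ E, ∑ y ∈ F.filter (fun y => tdist x y = r ∧ y.length - lcpLen x y = d), w y)
        ≤ ∑ x ∈ E, K * κ ^ ((d : ℝ) / s') * MsSph s w x := Finset.sum_le_sum hper
      _ = K * κ ^ ((d : ℝ) / s') * B := by rw [hB, Finset.mul_sum]
  -- combine with the min-sum lemma
  have hP : ∑ x ∈ E, wsum w (↑F ∩ sph x r) ≤
      Ctot * (κ ^ ((r : ℝ) * α) * K ^ β * (W ^ α * B ^ β)) := by
    rw [step2]
    refine le_trans (Finset.sum_le_sum fun d hd => le_min (boundA d hd) (boundB d hd)) ?_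
    have h := sum_min_le s' hs'1 κ K W B hκ2' hκt' hK1 hKt r
    have e1 : (1 : ℝ) / (s' + 1) = α := hα.symm
    have e2 : s' / (s' + 1) = β := hβ.symm
    rw [e1, e2] at h
    exact h
  -- final exponent juggling
  have hKβ : K ^ β = 2 ^ (β / s) * κ ^ ((r : ℝ) * (β / s)) := by
    rw [hK]
    calc ((2 * κ ^ r) ^ (1 / s)) ^ β = (2 * κ ^ r) ^ (1 / s * β) := (ENNReal.rpow_mul _ _ _).symm
      _ = (2 * κ ^ r) ^ (β / s) := by congr 1; ring
      _ = 2 ^ (β / s) * (κ ^ r) ^ (β / s) := ENNReal.mul_rpow_of_nonneg _ _ (by positivity)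
      _ = 2 ^ (β / s) * κ ^ ((r : ℝ) * (β / s)) := by
          rw [← ENNReal.rpow_natCast κ r, ← ENNReal.rpow_mul]
  have hexpid : (r : ℝ) * α + (r : ℝ) * (β / s) + -(r : ℝ) = -((r : ℝ) * α) := by
    have h2 : 2 * α + β / s = 1 := by
      rw [hα, hβ, hs'def]
      field_simp
      ring
    nlinarith [h2]
  have key2 : κ ^ ((r : ℝ) * α) * K ^ β / κ ^ r = 2 ^ (β / s) * κ ^ (-((r : ℝ) * α)) := by
    rw [hKβ, div_eq_mul_inv, ← ENNReal.rpow_natCast κ r, ← ENNReal.rpow_neg]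
    calc κ ^ ((r : ℝ) * α) * (2 ^ (β / s) * κ ^ ((r : ℝ) * (β / s))) * κ ^ (-(r : ℝ))
        = 2 ^ (β / s) * (κ ^ ((r : ℝ) * α) * κ ^ ((r : ℝ) * (β / s)) * κ ^ (-(r : ℝ))) := by ring
      _ = 2 ^ (β / s) * κ ^ ((r : ℝ) * α + (r : ℝ) * (β / s) + -(r : ℝ)) := by
          rw [ENNReal.rpow_add _ _ hκ0 hκt', ENNReal.rpow_add _ _ hκ0 hκt']
      _ = 2 ^ (β / s) * κ ^ (-((r : ℝ) * α)) := by rw [hexpid]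
  have h2pow : (2 : ℝ≥0∞) ^ (β / s) ≤ 2 := by
    calc (2 : ℝ≥0∞) ^ (β / s) ≤ (2 : ℝ≥0∞) ^ (1 : ℝ) :=
          ENNReal.rpow_le_rpow_of_exponent_le (by norm_num) hβss
      _ = 2 := ENNReal.rpow_one 2
  have hfinal : -(r : ℝ) / (s' + 1) = -((r : ℝ) * α) := by rw [hα]; ring
  calc ∑ x ∈ E, wsum w (↑F ∩ sph x r) / sphCard x r
      ≤ (∑ x ∈ E, wsum w (↑F ∩ sph x r)) / κ ^ r := step1
    _ ≤ (Ctot * (κ ^ ((r : ℝ) * α) * K ^ β * (W ^ α * B ^ β))) / κ ^ r := by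
        exact ENNReal.div_le_div_right hP _
    _ = Ctot * (κ ^ ((r : ℝ) * α) * K ^ β / κ ^ r) * (W ^ α * B ^ β) := by
        rw [div_eq_mul_inv, div_eq_mul_inv]; ring
    _ = Ctot * (2 ^ (β / s) * κ ^ (-((r : ℝ) * α))) * (W ^ α * B ^ β) := by rw [key2]
    _ ≤ Ctot * 2 * κ ^ (-(r : ℝ) / (s' + 1)) * (W ^ α * B ^ (1 - α)) := by
        rw [hfinal, h1mα]
        calc Ctot * (2 ^ (β / s) * κ ^ (-((r : ℝ) * α))) * (W ^ α * B ^ β)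
            ≤ Ctot * (2 * κ ^ (-((r : ℝ) * α))) * (W ^ α * B ^ β) :=
              mul_le_mul_left (mul_le_mul_right (mul_le_mul_left h2pow _) _) _
          _ = Ctot * 2 * κ ^ (-((r : ℝ) * α)) * (W ^ α * B ^ β) := by ring

end TreeAux
namespace TreeAux

lemma STk_lb {k : ℕ} (hk : 2 ≤ k) (r : ℕ) : (k : ℝ≥0∞) ^ r ≤ STk k r :=
  le_trans (sphCard_lb hk [] r) (le_iSup (fun x : V k => sphCard x r) [])

lemma STk_ub {k : ℕ} (hk : 2 ≤ k) (r : ℕ) : STk k r ≤ 2 * (k : ℝ≥0∞) ^ r :=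
  iSup_le fun x => sphCard_ub hk x r

end TreeAux

theorem stmt19' (s : ℝ) (hs : 1 < s) :
    ∃ c : ℝ≥0, 0 < c ∧ ∀ (k : ℕ), 2 ≤ k → ∀ (w : V k → ℝ≥0∞) (r n : ℕ),
      ETk k w s r (1 / (s / (s - 1) + 1)) ≤
          (c : ℝ≥0∞) * (k : ℝ≥0∞) ^ (-(r : ℝ) / (s / (s - 1) + 1)) ∧
      (k : ℝ≥0∞) ^ r ≤ STk k r ∧ STk k r ≤ (c : ℝ≥0∞) * (k : ℝ≥0∞) ^ r ∧
      (ETk k w s r (1 / (s / (s - 1) + 1))) ^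
            ((1 : ℝ) / (1 - 1 / (s / (s - 1) + 1))) *
          (STk k r) ^ ((1 / 2 : ℝ) * ((1 / (s / (s - 1) + 1)) / (1 - 1 / (s / (s - 1) + 1)))) *
          (2 : ℝ≥0∞) ^ ((n : ℝ) * ((1 / 2) * ((1 / (s / (s - 1) + 1)) / (1 - 1 / (s / (s - 1) + 1))))) ≤
        (c : ℝ≥0∞) * ((2 : ℝ≥0∞) ^ (n : ℕ) / (k : ℝ≥0∞) ^ r) ^ ((1 : ℝ) / (2 * (s / (s - 1)))) := by
  classical
  have hs1 : (0 : ℝ) < s - 1 := by linarith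
  set s' : ℝ := s / (s - 1) with hs'def
  have hs'1 : 1 < s' := by rw [hs'def, lt_div_iff₀ hs1]; linarith
  have hs'0 : (0 : ℝ) < s' := by linarith
  set α : ℝ := 1 / (s' + 1) with hα
  have hα0 : 0 < α := by positivity
  have hα1 : α < 1 := by
    rw [hα, div_lt_one (by linarith)]; linarith
  have h1mα : (0 : ℝ) < 1 - α := by linarith
  set e1 : ℝ := (1 : ℝ) / (1 - α) with he1
  set e2 : ℝ := (1 / 2 : ℝ) * (α / (1 - α)) with he2
  have he10 : 0 ≤ e1 := by positivity
  have he20 : 0 ≤ e2 := by rw [he2]; positivity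
  -- ρ and finiteness of the constant
  set ρ : ℝ≥0∞ := (2 : ℝ≥0∞) ^ (-(1 / s')) with hρ
  have hρlt : ρ < 1 := by
    rw [hρ]
    calc (2 : ℝ≥0∞) ^ (-(1 / s')) < (2 : ℝ≥0∞) ^ (0 : ℝ) := by
          refine ENNReal.rpow_lt_rpow_of_exponent_lt (by norm_num) (by norm_num) ?_
          have : (0 : ℝ) < 1 / s' := by positivity
          linarith
      _ = 1 := ENNReal.rpow_zero
  have hDt : (1 - ρ)⁻¹ ≠ ⊤ := by
    refine ENNReal.inv_ne_top.2 ?_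
    intro h
    rw [tsub_eq_zero_iff_le] at h
    exact absurd h (not_le.2 hρlt)
  set CE : ℝ≥0∞ := (2 + (1 - ρ)⁻¹) * 2 with hCE
  have hCEt : CE ≠ ⊤ := by
    rw [hCE]
    exact ENNReal.mul_ne_top (by
      refine ENNReal.add_ne_top.2 ⟨by norm_num, hDt⟩) (by norm_num)
  have hCE0 : CE ≠ 0 := by
    rw [hCE]
    exact mul_ne_zero (by simp) (by norm_num)
  set Cmid : ℝ≥0∞ := CE ^ e1 * 2 ^ e2 with hCmid
  have hCmidt : Cmid ≠ ⊤ := by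
    rw [hCmid]
    exact ENNReal.mul_ne_top (ENNReal.rpow_ne_top_of_nonneg he10 hCEt)
      (ENNReal.rpow_ne_top_of_nonneg he20 (by norm_num))
  set Cbig : ℝ≥0∞ := CE + Cmid + 2 with hCbig
  have hCbigt : Cbig ≠ ⊤ := by
    rw [hCbig]
    exact ENNReal.add_ne_top.2 ⟨ENNReal.add_ne_top.2 ⟨hCEt, hCmidt⟩, by norm_num⟩
  refine ⟨Cbig.toNNReal, ?_, ?_⟩
  · refine ENNReal.toNNReal_pos ?_ hCbigt
    intro h
    rw [hCbig] at h
    simp [add_eq_zero] at h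
  intro k hk w r n
  have hcoe : (Cbig.toNNReal : ℝ≥0∞) = Cbig := ENNReal.coe_toNNReal hCbigt
  set κ : ℝ≥0∞ := (k : ℝ≥0∞) with hκdef
  have hκ2' : (2 : ℝ≥0∞) ≤ κ := TreeAux.hκ2 hk
  have hκt' : κ ≠ ⊤ := TreeAux.hκt
  have hκ0 : κ ≠ 0 := by intro h; rw [h] at hκ2'; simp at hκ2'
  have hCECbig : CE ≤ Cbig := by rw [hCbig, add_assoc]; exact le_self_add
  have h2Cbig : (2 : ℝ≥0∞) ≤ Cbig := by rw [hCbig]; exact le_add_self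
  have hCmidCbig : Cmid ≤ Cbig := by
    rw [hCbig]
    calc Cmid ≤ CE + Cmid := le_add_self
      _ ≤ CE + Cmid + 2 := le_self_add
  have hET : ETk k w s r (1 / (s' + 1)) ≤ CE * κ ^ (-(r : ℝ) / (s' + 1)) :=
    TreeAux.ETk_le hk hs w r
  refine ⟨?_, TreeAux.STk_lb hk r, ?_, ?_⟩
  · rw [hcoe]
    exact le_trans hET (mul_le_mul_left hCECbig _)
  · rw [hcoe]
    exact le_trans (TreeAux.STk_ub hk r) (mul_le_mul_left h2Cbig _)
  -- the product estimate
  have hST : STk k r ≤ 2 * κ ^ r := TreeAux.STk_ub hk r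
  -- exponent identities
  have hid1 : (-(r : ℝ) / (s' + 1)) * e1 = -(r : ℝ) / s' := by
    rw [he1, hα]
    field_simp
    rw [add_sub_cancel_right, mul_div_assoc, div_self hs'0.ne', mul_one]
  have hid2 : (r : ℝ) * e2 = (r : ℝ) / (2 * s') := by
    rw [he2, hα]
    field_simp
    rw [add_sub_cancel_right, mul_div_assoc, div_self hs'0.ne', mul_one]
  have hid3 : (n : ℝ) * e2 = (n : ℝ) * ((1 : ℝ) / (2 * s')) := by
    rw [he2, hα]
    field_simp
    rw [add_sub_cancel_right, mul_div_assoc, div_self hs'0.ne', mul_one]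
  have hid4 : -(r : ℝ) / s' + (r : ℝ) / (2 * s') = -((r : ℝ) * ((1 : ℝ) / (2 * s'))) := by
    field_simp
    ring
  have hLHS : (ETk k w s r (1 / (s' + 1))) ^ e1 * (STk k r) ^ e2 * (2 : ℝ≥0∞) ^ ((n : ℝ) * e2) ≤
      Cmid * (κ ^ (-((r : ℝ) * ((1 : ℝ) / (2 * s')))) * (2 : ℝ≥0∞) ^ ((n : ℝ) * ((1 : ℝ) / (2 * s')))) := by
    calc (ETk k w s r (1 / (s' + 1))) ^ e1 * (STk k r) ^ e2 * (2 : ℝ≥0∞) ^ ((n : ℝ) * e2)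
        ≤ (CE * κ ^ (-(r : ℝ) / (s' + 1))) ^ e1 * (2 * κ ^ r) ^ e2 * (2 : ℝ≥0∞) ^ ((n : ℝ) * e2) :=
          mul_le_mul_left (mul_le_mul' (ENNReal.rpow_le_rpow hET he10)
            (ENNReal.rpow_le_rpow hST he20)) _
      _ = (CE ^ e1 * κ ^ (-(r : ℝ) / s')) * (2 ^ e2 * κ ^ ((r : ℝ) / (2 * s'))) *
            (2 : ℝ≥0∞) ^ ((n : ℝ) * ((1 : ℝ) / (2 * s'))) := by
          rw [ENNReal.mul_rpow_of_nonneg _ _ he10, ENNReal.mul_rpow_of_nonneg _ _ he20,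
            ← ENNReal.rpow_mul, hid1, ← ENNReal.rpow_natCast κ r, ← ENNReal.rpow_mul, hid2, hid3]
      _ = Cmid * (κ ^ (-(r : ℝ) / s') * κ ^ ((r : ℝ) / (2 * s')) *
            (2 : ℝ≥0∞) ^ ((n : ℝ) * ((1 : ℝ) / (2 * s')))) := by
          rw [hCmid]; ring
      _ = Cmid * (κ ^ (-((r : ℝ) * ((1 : ℝ) / (2 * s')))) *
            (2 : ℝ≥0∞) ^ ((n : ℝ) * ((1 : ℝ) / (2 * s')))) := by
          rw [← ENNReal.rpow_add _ _ hκ0 hκt', hid4]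
  have hRHS : (Cbig : ℝ≥0∞) * ((2 : ℝ≥0∞) ^ (n : ℕ) / κ ^ r) ^ ((1 : ℝ) / (2 * s')) =
      Cbig * (κ ^ (-((r : ℝ) * ((1 : ℝ) / (2 * s')))) * (2 : ℝ≥0∞) ^ ((n : ℝ) * ((1 : ℝ) / (2 * s')))) := by
    rw [ENNReal.div_rpow_of_nonneg _ _ (by positivity)]
    rw [← ENNReal.rpow_natCast (2 : ℝ≥0∞) n, ← ENNReal.rpow_natCast κ r,
      ← ENNReal.rpow_mul, ← ENNReal.rpow_mul]
    rw [div_eq_mul_inv, ← ENNReal.rpow_neg]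
    ring
  rw [hcoe, hRHS]
  calc (ETk k w s r (1 / (s' + 1))) ^ e1 * (STk k r) ^ e2 * (2 : ℝ≥0∞) ^ ((n : ℝ) * e2)
      ≤ Cmid * (κ ^ (-((r : ℝ) * ((1 : ℝ) / (2 * s')))) *
          (2 : ℝ≥0∞) ^ ((n : ℝ) * ((1 : ℝ) / (2 * s')))) := hLHS
    _ ≤ Cbig * (κ ^ (-((r : ℝ) * ((1 : ℝ) / (2 * s')))) *
          (2 : ℝ≥0∞) ^ ((n : ℝ) * ((1 : ℝ) / (2 * s')))) := mul_le_mul_left hCmidCbig _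

/-- For the `k`-ary tree with `α = 1/(s'+1)`, `s' = s/(s-1)`: `E_T^w(s,r,α) ≤ c_s k^{-r/(s'+1)}`,
`S_T(r) ≃ k^r`, and hence
`E_T^w(s,r,α)^{1/(1-α)} S_T(r)^{(1/2)α/(1-α)} 2^{n(1/2)α/(1-α)} ≲ c_s (2^n/k^r)^{1/(2s')}`. -/
theorem stmt19 (s : ℝ) (hs : 1 < s) :
    ∃ c : ℝ≥0, 0 < c ∧ ∀ (k : ℕ), 2 ≤ k → ∀ (w : V k → ℝ≥0∞) (r n : ℕ),
      ETk k w s r (1 / (s / (s - 1) + 1)) ≤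
          (c : ℝ≥0∞) * (k : ℝ≥0∞) ^ (-(r : ℝ) / (s / (s - 1) + 1)) ∧
      (k : ℝ≥0∞) ^ r ≤ STk k r ∧ STk k r ≤ (c : ℝ≥0∞) * (k : ℝ≥0∞) ^ r ∧
      (ETk k w s r (1 / (s / (s - 1) + 1))) ^
            ((1 : ℝ) / (1 - 1 / (s / (s - 1) + 1))) *
          (STk k r) ^ ((1 / 2 : ℝ) * ((1 / (s / (s - 1) + 1)) / (1 - 1 / (s / (s - 1) + 1)))) *
          (2 : ℝ≥0∞) ^ ((n : ℝ) * ((1 / 2) * ((1 / (s / (s - 1) + 1)) / (1 - 1 / (s / (s - 1) + 1))))) ≤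
        (c : ℝ≥0∞) * ((2 : ℝ≥0∞) ^ (n : ℕ) / (k : ℝ≥0∞) ^ r) ^ ((1 : ℝ) / (2 * (s / (s - 1)))) :=
  stmt19' s hs
end
end
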